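/- arXiv:2503.03621 — 13 statements merged into one kernel-verified Lean document; each statement's English description precedes it below -/
import Mathlib

section
/- Let A = !![a, b; c, d] be a 2×2 integer matrix with b*c ≠ 0. Then there exists a 2×2 integer matrix B = !![a₁, b₁; c₁, 0] with b₁*c₁ ≠ 0 and gcd(a₁, gcd(b₁, c₁)) = 1 such that the centralizer of A in M₂(ℤ) equals the centralizer of B in M₂(ℤ). -/
theorem stmt_0 (a b c d : ℤ) (hbc : b * c ≠ 0) :
    ∃ a₁ b₁ c₁ : ℤ, b₁ * c₁ ≠ 0 ∧ Int.gcd a₁ (Int.gcd b₁ c₁) = 1 ∧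
      {B : Matrix (Fin 2) (Fin 2) ℤ | !![a, b; c, d] * B = B * !![a, b; c, d]} =
      {B : Matrix (Fin 2) (Fin 2) ℤ | !![a₁, b₁; c₁, 0] * B = B * !![a₁, b₁; c₁, 0]} := by
  set g : ℕ := Int.gcd (a - d) (Int.gcd b c) with hg
  have hb : b ≠ 0 := fun h => hbc (by simp [h])
  have hc : c ≠ 0 := fun h => hbc (by simp [h])
  have hgbc : Int.gcd b c ≠ 0 := by
    simp [Int.gcd_eq_zero_iff]; tauto
  have hg0 : g ≠ 0 := by
    intro h
    rw [hg, Int.gcd_eq_zero_iff] at h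
    exact hgbc (by exact_mod_cast h.2)
  have hgz : (g : ℤ) ≠ 0 := by exact_mod_cast hg0
  have hdvd_ad : (g : ℤ) ∣ a - d := Int.gcd_dvd_left _ _
  have hdvd_gbc : (g : ℤ) ∣ (Int.gcd b c : ℤ) := Int.gcd_dvd_right _ _
  have hdvd_b : (g : ℤ) ∣ b := hdvd_gbc.trans (Int.gcd_dvd_left _ _)
  have hdvd_c : (g : ℤ) ∣ c := hdvd_gbc.trans (Int.gcd_dvd_right _ _)
  obtain ⟨a₁, ha₁⟩ := hdvd_ad
  obtain ⟨b₁, hb₁⟩ := hdvd_b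
  obtain ⟨c₁, hc₁⟩ := hdvd_c
  refine ⟨a₁, b₁, c₁, ?_, ?_, ?_⟩
  · intro h
    apply hbc
    rw [hb₁, hc₁]
    calc (g : ℤ) * b₁ * ((g : ℤ) * c₁) = (g : ℤ) * (g : ℤ) * (b₁ * c₁) := by ring
    _ = 0 := by rw [h, mul_zero]
  · -- gcd condition
    have hG : (Int.gcd b c : ℤ) = (g : ℤ) * (Int.gcd b₁ c₁ : ℤ) := by
      rw [hb₁, hc₁]
      rw [Int.gcd_mul_left]
      push_cast
      simp
    have key : (g : ℤ) = (g : ℤ) * (Int.gcd a₁ (Int.gcd b₁ c₁) : ℤ) := by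
      conv_lhs => rw [hg]
      rw [ha₁]
      have : ((Int.gcd b c : ℤ)) = (g : ℤ) * (Int.gcd b₁ c₁ : ℤ) := hG
      calc (Int.gcd ((g:ℤ) * a₁) ((Int.gcd b c : ℕ) : ℤ) : ℤ)
          = (Int.gcd ((g:ℤ) * a₁) ((g:ℤ) * (Int.gcd b₁ c₁ : ℤ)) : ℤ) := by rw [← hG]
        _ = (g : ℤ) * (Int.gcd a₁ (Int.gcd b₁ c₁) : ℤ) := by
            rw [Int.gcd_mul_left]; push_cast; simp
    have : (1 : ℤ) = (Int.gcd a₁ (Int.gcd b₁ c₁) : ℤ) := by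
      have := key
      have := mul_left_cancel₀ hgz (this.symm.trans (mul_one _).symm)
      nlinarith [this]
    exact_mod_cast this.symm
  · -- set equality
    ext B
    simp only [Set.mem_setOf_eq]
    have hA : !![a, b; c, d] = (g : ℤ) • !![a₁, b₁; c₁, 0] + !![(d:ℤ), 0; 0, d] := by
      ext i j
      fin_cases i <;> fin_cases j <;>
        simp [Matrix.smul_apply, hb₁.symm, hc₁.symm] <;> linarith [ha₁]
    have hcomm : ∀ M : Matrix (Fin 2) (Fin 2) ℤ,
        !![(d:ℤ), 0; 0, d] * M = M * !![(d:ℤ), 0; 0, d] := by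
      intro M
      ext i j
      fin_cases i <;> fin_cases j <;>
        simp [Matrix.mul_apply, Fin.sum_univ_two, mul_comm]
    rw [hA]
    constructor
    · intro h
      have h2 : (g : ℤ) • (!![a₁, b₁; c₁, 0] * B) = (g : ℤ) • (B * !![a₁, b₁; c₁, 0]) := by
        have := h
        simp only [add_mul, mul_add, Matrix.smul_mul, Matrix.mul_smul, hcomm B] at this
        exact add_right_cancel this
      exact smul_right_injective _ hgz h2
    · intro h
      simp only [add_mul, mul_add, Matrix.smul_mul, Matrix.mul_smul, hcomm B, h]
end

section
/- Let A = !![a, b; c, 0] be a 2×2 integer matrix with b*c ≠ 0 and gcd(a, gcd(b, c)) = 1. Then the centralizer of A in M₂(ℤ) equals {x • 1 + t • A : x, t ∈ ℤ}, i.e., a matrix B ∈ M₂(ℤ) commutes with A if and only if B = x • 1 + t • A for some integers x and t. -/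
theorem stmt_1 (a b c : ℤ) (hbc : b * c ≠ 0)
    (hgcd : Int.gcd a (Int.gcd b c) = 1) :
    {B : Matrix (Fin 2) (Fin 2) ℤ | !![a, b; c, 0] * B = B * !![a, b; c, 0]} =
      {B : Matrix (Fin 2) (Fin 2) ℤ | ∃ x t : ℤ, B = x • (1 : Matrix (Fin 2) (Fin 2) ℤ) + t • !![a, b; c, 0]} := by
  have icast : ∀ (x : ℤ) (i j : Fin 2),
      ((x : Matrix (Fin 2) (Fin 2) ℤ)) i j = if i = j then x else 0 := by
    intro x i j
    rw [← Matrix.diagonal_intCast]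
    exact Matrix.diagonal_apply _ i j
  ext B
  simp only [Set.mem_setOf_eq]
  constructor
  · intro h
    have h00 := congrFun (congrFun h 0) 0
    have h01 := congrFun (congrFun h 0) 1
    have h10 := congrFun (congrFun h 1) 0
    simp [Matrix.mul_apply, Fin.sum_univ_two] at h00 h01 h10
    have e1 : b * (B 0 0 - B 1 1) = a * B 0 1 := by linarith
    have e2 : c * (B 0 0 - B 1 1) = a * B 1 0 := by linarith
    have e3 : b * B 1 0 = c * B 0 1 := by linarith
    set g : ℤ := (Int.gcd b c : ℤ) with hg
    have hbez1 : g = b * Int.gcdA b c + c * Int.gcdB b c := Int.gcd_eq_gcd_ab b c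
    have hgag : Int.gcd a g = 1 := by simpa [hg] using hgcd
    have hbez2 : (1 : ℤ) = a * Int.gcdA a g + g * Int.gcdB a g := by
      have := Int.gcd_eq_gcd_ab a g
      rw [hgag] at this
      simpa using this
    set α := Int.gcdA b c
    set β := Int.gcdB b c
    set u := Int.gcdA a g
    set v := Int.gcdB a g
    set t : ℤ := u * (B 0 0 - B 1 1) + v * (α * B 0 1 + β * B 1 0) with ht
    have g1 : B 0 0 - B 1 1 = t * a := by
      rw [ht]
      linear_combination (v*α)*e1 + (v*β)*e2 + v*(B 0 0 - B 1 1)*hbez1 + (B 0 0 - B 1 1)*hbez2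
    have g2 : B 0 1 = t * b := by
      rw [ht]
      linear_combination (-u)*e1 + (-(v*β))*e3 + v*(B 0 1)*hbez1 + (B 0 1)*hbez2
    have g3 : B 1 0 = t * c := by
      rw [ht]
      linear_combination (-u)*e2 + (v*α)*e3 + v*(B 1 0)*hbez1 + (B 1 0)*hbez2
    refine ⟨B 1 1, t, ?_⟩
    ext i j
    fin_cases i <;> fin_cases j <;>
      simp [Matrix.one_apply, icast] <;> linarith
  · rintro ⟨x, t, rfl⟩
    ext i j
    fin_cases i <;> fin_cases j <;>
      simp [Matrix.mul_apply, Fin.sum_univ_two, Matrix.one_apply, icast] <;> ring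
end

section
/- Let A = !![a, b; c, 0] be a 2×2 integer matrix with b*c ≠ 0 and gcd(a, gcd(b, c)) = 1. Then the centralizer C(A) = {B ∈ M₂(ℤ) : A*B = B*A} is a commutative subring of M₂(ℤ) containing the identity matrix. -/
theorem stmt_2 (a b c : ℤ) (hbc : b * c ≠ 0)
    (hgcd : Int.gcd a (Int.gcd b c) = 1) :
    let A : Matrix (Fin 2) (Fin 2) ℤ := !![a, b; c, 0]
    let C : Set (Matrix (Fin 2) (Fin 2) ℤ) := {B | A * B = B * A}
    (1 : Matrix (Fin 2) (Fin 2) ℤ) ∈ C ∧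
    (∀ X ∈ C, ∀ Y ∈ C, X + Y ∈ C) ∧
    (∀ X ∈ C, -X ∈ C) ∧
    (∀ X ∈ C, ∀ Y ∈ C, X * Y ∈ C) ∧
    (∀ X ∈ C, ∀ Y ∈ C, X * Y = Y * X) := by
  intro A C
  have hb : b ≠ 0 := left_ne_zero_of_mul hbc
  have hc : c ≠ 0 := right_ne_zero_of_mul hbc
  refine ⟨?_, ?_, ?_, ?_, ?_⟩
  · show A * 1 = 1 * A; rw [mul_one, one_mul]
  · intro X hX Y hY
    show A * (X + Y) = (X + Y) * A
    rw [mul_add, add_mul, hX, hY]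
  · intro X hX
    show A * (-X) = (-X) * A
    rw [mul_neg, neg_mul, hX]
  · intro X hX Y hY
    show A * (X * Y) = X * Y * A
    rw [← mul_assoc, hX, mul_assoc, hY, ← mul_assoc]
  · intro X hX Y hY
    have hX' : !![a, b; c, 0] * X = X * !![a, b; c, 0] := hX
    have hY' : !![a, b; c, 0] * Y = Y * !![a, b; c, 0] := hY
    have hX1 := congrFun (congrFun hX' 0) 0
    have hX2 := congrFun (congrFun hX' 0) 1
    have hX3 := congrFun (congrFun hX' 1) 0
    have hY1 := congrFun (congrFun hY' 0) 0
    have hY2 := congrFun (congrFun hY' 0) 1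
    have hY3 := congrFun (congrFun hY' 1) 0
    simp [Matrix.mul_apply, Fin.sum_univ_two] at hX1 hX2 hX3 hY1 hY2 hY3
    ext i j
    fin_cases i <;> fin_cases j <;> simp [Matrix.mul_apply, Fin.sum_univ_two]
    · refine mul_left_cancel₀ hb ?_
      linear_combination (X 0 1) * hY1 - (Y 0 1) * hX1
    · refine mul_left_cancel₀ hb ?_
      linear_combination (X 0 1) * hY2 - (Y 0 1) * hX2
    · refine mul_left_cancel₀ hc ?_
      linear_combination (X 1 0) * hY3 - (Y 1 0) * hX3
    · refine mul_left_cancel₀ hb ?_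
      linear_combination (Y 0 1) * hX1 - (X 0 1) * hY1
end

section
/- Let A = !![a, b; c, 0] be a 2×2 integer matrix with b*c ≠ 0 and gcd(a, gcd(b, c)) = 1. If a² + 4*b*c is a perfect square, then there exist nonzero matrices B₁, B₂ in the centralizer C(A) with B₁ * B₂ = 0; conversely, if a² + 4*b*c is not a perfect square, then for all B₁, B₂ ∈ C(A) with B₁ ≠ 0 and B₂ ≠ 0, one has B₁ * B₂ ≠ 0. -/
lemma bezout3 (a b c : ℤ) (hgcd : Int.gcd a (Int.gcd b c) = 1) :
    ∃ u v w : ℤ, a * u + b * v + c * w = 1 := by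
  have h1 := Int.gcd_eq_gcd_ab a (Int.gcd b c)
  have h2 := Int.gcd_eq_gcd_ab b c
  rw [hgcd] at h1
  refine ⟨Int.gcdA a (Int.gcd b c), Int.gcdA b c * Int.gcdB a (Int.gcd b c),
    Int.gcdB b c * Int.gcdB a (Int.gcd b c), ?_⟩
  push_cast at h1
  linear_combination -h1 - Int.gcdB a (Int.gcd b c) * h2

lemma sq_of_sq_mul_sq (n m y : ℤ) (hy : y ≠ 0) (h : m ^ 2 = n * y ^ 2) :
    ∃ k : ℤ, n = k ^ 2 := by
  have hdvd : y ∣ m := by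
    rw [← Int.pow_dvd_pow_iff (two_ne_zero)]
    exact ⟨n, by linarith⟩
  obtain ⟨k, rfl⟩ := hdvd
  refine ⟨k, ?_⟩
  have hy2 : y ^ 2 ≠ 0 := pow_ne_zero _ hy
  have h2 : y ^ 2 * n = y ^ 2 * k ^ 2 := by linear_combination -h
  exact mul_left_cancel₀ hy2 h2

lemma detzero_aux (a b c : ℤ) (hgcd : Int.gcd a (Int.gcd b c) = 1)
    (B : Matrix (Fin 2) (Fin 2) ℤ)
    (hB : !![a, b; c, 0] * B = B * !![a, b; c, 0])
    (hn : B ≠ 0) (hdet : B.det = 0) : ∃ k : ℤ, a ^ 2 + 4 * b * c = k ^ 2 := by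
  set p := B 0 0 with hp
  set q := B 0 1 with hq
  set r := B 1 0 with hr
  set s := B 1 1 with hs
  have h00 := congr_fun (congr_fun hB 0) 0
  have h01 := congr_fun (congr_fun hB 0) 1
  have h10 := congr_fun (congr_fun hB 1) 0
  simp [Matrix.mul_apply, Fin.sum_univ_two, ← hp, ← hq, ← hr, ← hs] at h00 h01 h10
  obtain ⟨u, v, w, huvw⟩ := bezout3 a b c hgcd
  set y := u * (p - s) + v * q + w * r with hy
  have hqy : q = y * b := by linear_combination u * h01 - w * h00 - q * huvw
  have hry : r = y * c := by linear_combination -u * h10 + v * h00 - r * huvw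
  have hpy : p = s + y * a := by
    linear_combination -v * h01 + w * h10 - (p - s) * huvw
  rw [Matrix.det_fin_two, ← hp, ← hq, ← hr, ← hs] at hdet
  by_cases hy0 : y = 0
  · exfalso
    rw [hy0] at hqy hry hpy
    simp only [zero_mul, add_zero] at hqy hry hpy
    rw [hpy, hqy] at hdet
    simp only [zero_mul, sub_zero] at hdet
    have hs0 : s = 0 := mul_self_eq_zero.mp hdet
    apply hn
    ext i j
    fin_cases i <;> fin_cases j <;>
      simp [← hp, ← hq, ← hr, ← hs, hqy, hry, hpy, hs0]
  · apply sq_of_sq_mul_sq _ (2 * s + a * y) y hy0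
    linear_combination 4 * hdet - 4 * s * hpy + 4 * r * hqy + 4 * y * b * hry

theorem stmt_3 (a b c : ℤ) (hbc : b * c ≠ 0)
    (hgcd : Int.gcd a (Int.gcd b c) = 1) :
    let A : Matrix (Fin 2) (Fin 2) ℤ := !![a, b; c, 0]
    let C : Set (Matrix (Fin 2) (Fin 2) ℤ) := {B | A * B = B * A}
    ((∃ k : ℤ, a ^ 2 + 4 * b * c = k ^ 2) →
      ∃ B₁ ∈ C, ∃ B₂ ∈ C, B₁ ≠ 0 ∧ B₂ ≠ 0 ∧ B₁ * B₂ = 0) ∧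
    ((¬ ∃ k : ℤ, a ^ 2 + 4 * b * c = k ^ 2) →
      ∀ B₁ ∈ C, ∀ B₂ ∈ C, B₁ ≠ 0 → B₂ ≠ 0 → B₁ * B₂ ≠ 0) := by
  intro A C
  have hb : b ≠ 0 := fun h => hbc (by simp [h])
  constructor
  · rintro ⟨k, hk⟩
    refine ⟨!![k + a, 2 * b; 2 * c, k - a], ?_, !![a - k, 2 * b; 2 * c, -a - k], ?_, ?_, ?_, ?_⟩
    · show A * _ = _ * A
      simp only [A]
      ext i j
      fin_cases i <;> fin_cases j <;>
        simp [Matrix.mul_apply, Fin.sum_univ_two] <;> ring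
    · show A * _ = _ * A
      simp only [A]
      ext i j
      fin_cases i <;> fin_cases j <;>
        simp [Matrix.mul_apply, Fin.sum_univ_two] <;> ring
    · intro h
      have := congr_fun (congr_fun h 0) 1
      simp at this
      exact hb this
    · intro h
      have := congr_fun (congr_fun h 0) 1
      simp at this
      exact hb this
    · ext i j
      fin_cases i <;> fin_cases j <;>
        simp [Matrix.mul_apply, Fin.sum_univ_two] <;>
        first
          | linear_combination hk
          | ring
  · intro hnsq B₁ hB₁ B₂ hB₂ hn1 hn2 hprod
    apply hnsq
    have hdet : B₁.det * B₂.det = 0 := by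
      rw [← Matrix.det_mul, hprod, Matrix.det_zero]
    rcases mul_eq_zero.mp hdet with h | h
    · exact detzero_aux a b c hgcd B₁ hB₁ hn1 h
    · exact detzero_aux a b c hgcd B₂ hB₂ hn2 h
end

section
/- Let A = !![a, b; c, 0] be a 2×2 integer matrix with b*c ≠ 0 and gcd(a, gcd(b, c)) = 1, and suppose a² + 4*b*c is not a perfect square. Then every nonzero matrix B in the centralizer C(A) has nonzero determinant. -/
theorem stmt_4 (a b c : ℤ) (hbc : b * c ≠ 0)
    (hgcd : Int.gcd a (Int.gcd b c) = 1)
    (hsq : ¬ ∃ k : ℤ, a ^ 2 + 4 * b * c = k ^ 2)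
    (B : Matrix (Fin 2) (Fin 2) ℤ)
    (hB : !![a, b; c, 0] * B = B * !![a, b; c, 0]) (hB0 : B ≠ 0) :
    B.det ≠ 0 := by
  intro hdet
  have hb : b ≠ 0 := fun h => hbc (by simp [h])
  have hc : c ≠ 0 := fun h => hbc (by simp [h])
  set p := B 0 0 with hp
  set q := B 0 1 with hq
  set r := B 1 0 with hr
  set s := B 1 1 with hs
  have h00 := congrFun (congrFun hB 0) 0
  have h01 := congrFun (congrFun hB 0) 1
  have h10 := congrFun (congrFun hB 1) 0
  simp [Matrix.mul_apply, Fin.sum_univ_two] at h00 h01 h10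
  rw [Matrix.det_fin_two] at hdet
  have hps : p * s = q * r := by linarith
  have eb : b * (p - s) = a * q := by ring_nf; linarith
  have ec : c * (p - s) = a * r := by ring_nf; linarith
  have key : (a ^ 2 + 4 * b * c) * (p - s) ^ 2 = (a * (p + s)) ^ 2 := by
    linear_combination (4 * c * (p - s)) * eb + (4 * a * q) * ec + (-4 * a ^ 2) * hps
  have hBne : ¬ (p = 0 ∧ q = 0 ∧ r = 0 ∧ s = 0) := by
    rintro ⟨h1, h2, h3, h4⟩
    apply hB0
    ext i j
    fin_cases i <;> fin_cases j <;> simpa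
  by_cases hd : p - s = 0
  · -- p = s
    have hq0 : a * q = 0 := by rw [← eb, hd, mul_zero]
    have hr0 : a * r = 0 := by rw [← ec, hd, mul_zero]
    have hseq : s = p := by linarith
    by_cases ha : a = 0
    · -- gcd b c = 1
      have hcop : IsCoprime b c := by
        rw [Int.isCoprime_iff_gcd_eq_one]
        simpa [ha, Int.gcd] using hgcd
      have hbr : b * r = c * q := by linarith [h00]
      have hbq : b ∣ c * q := ⟨r, hbr.symm⟩
      have hbq' : b ∣ q := (IsCoprime.dvd_of_dvd_mul_left hcop hbq)
      obtain ⟨u, hu⟩ := hbq'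
      have hru : r = c * u := by
        have h2 : b * r = b * (c * u) := by linear_combination hbr + c * hu
        exact mul_left_cancel₀ hb h2
      have hps' : p * p = q * r := by rw [hseq] at hps; exact hps
      have hp2 : p ^ 2 = b * c * u ^ 2 := by
        linear_combination hps' + r * hu + (b * u) * hru
      by_cases hu0 : u = 0
      · apply hBne
        have : p = 0 := by
          have h3 := hp2
          rw [hu0] at h3
          nlinarith [h3]
        exact ⟨this, by simp [hu, hu0], by simp [hru, hu0], by rw [hseq, this]⟩
      · have hdvd : u ∣ p := by
          rw [← Int.pow_dvd_pow_iff (two_ne_zero)]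
          exact ⟨b * c, by linarith [hp2]⟩
        obtain ⟨v, hv⟩ := hdvd
        have : b * c = v ^ 2 := by
          have h2 : u ^ 2 * (b * c) = u ^ 2 * v ^ 2 := by rw [hv] at hp2; linarith [hp2]
          exact mul_left_cancel₀ (pow_ne_zero 2 hu0) h2
        exact hsq ⟨2 * v, by rw [ha]; linarith [this]⟩
    · apply hBne
      have hq0' : q = 0 := by rcases mul_eq_zero.1 hq0 with h | h; exact absurd h ha; exact h
      have hr0' : r = 0 := by rcases mul_eq_zero.1 hr0 with h | h; exact absurd h ha; exact h
      have : p = 0 := by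
        have := hps
        rw [hseq, hq0', hr0'] at this
        nlinarith [this]
      exact ⟨this, hq0', hr0', by rw [hseq, this]⟩
  · have hdvd : (p - s) ∣ a * (p + s) := by
      rw [← Int.pow_dvd_pow_iff (two_ne_zero)]
      exact ⟨a ^ 2 + 4 * b * c, by linarith [key]⟩
    obtain ⟨k, hk⟩ := hdvd
    apply hsq ⟨k, ?_⟩
    have h2 : (a ^ 2 + 4 * b * c) * (p - s) ^ 2 = k ^ 2 * (p - s) ^ 2 := by
      rw [key, hk]; ring
    have := mul_right_cancel₀ (pow_ne_zero 2 hd) h2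
    exact this
end

section
/- Let A = !![a, b; c, 0] be a 2×2 integer matrix with b*c ≠ 0 and gcd(a, gcd(b, c)) = 1, and let u, v, w be nonzero integers with gcd(u, gcd(v, w)) = 1. Suppose a² + 4*b*c is a perfect square. Then for natural numbers i, j, k, the equation u•X^i + v•Y^j = w•Z^k has a solution X, Y, Z in the centralizer C(A) with det(X*Y*Z) ≠ 0 if and only if the equation u*x^i + v*y^j = w*z^k has a solution in nonzero integers x, y, z. -/
open Matrix

lemma eig_lemma (a b c m g e₀ e₁ : ℤ) (hc : c ≠ 0) (hg : g ≠ 0)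
    (he₀ : m = g * e₀) (he₁ : c = g * e₁)
    (hcop : IsCoprime e₀ e₁) (hm : m ^ 2 = a * m + b * c)
    (B : Matrix (Fin 2) (Fin 2) ℤ)
    (hB : !![a, b; c, 0] * B = B * !![a, b; c, 0]) :
    ∃ μ : ℤ, (∀ n : ℕ, (B ^ n) *ᵥ ![e₀, e₁] = μ ^ n • ![e₀, e₁]) ∧
      (B.det ≠ 0 → μ ≠ 0) := by
  have he₁0 : e₁ ≠ 0 := by rintro rfl; simp at he₁; omega
  have hAe : !![a, b; c, 0] *ᵥ ![e₀, e₁] = m • ![e₀, e₁] := by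
    funext i
    fin_cases i
    · have h4 : a * e₀ + b * e₁ = m * e₀ := by
        have hcancel : g * (a * e₀ + b * e₁) = g * (m * e₀) := by
          linear_combination (m - a) * he₀ - b * he₁ - hm
        exact mul_left_cancel₀ hg hcancel
      simp [Matrix.mulVec, dotProduct, Fin.sum_univ_two]
      linarith
    · have h4 : c * e₀ = m * e₁ := by linear_combination e₀ * he₁ - e₁ * he₀
      simp [Matrix.mulVec, dotProduct, Fin.sum_univ_two]
      linarith
  have key : ∃ μ : ℤ, B *ᵥ ![e₀, e₁] = μ • ![e₀, e₁] := by
    set f := B *ᵥ ![e₀, e₁] with hf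
    have hAf : !![a, b; c, 0] *ᵥ f = m • f := by
      rw [hf, Matrix.mulVec_mulVec, hB, ← Matrix.mulVec_mulVec, hAe,
        Matrix.mulVec_smul]
    have h1 : c * f 0 = m * f 1 := by
      have := congrFun hAf 1
      simp [Matrix.mulVec, dotProduct, Fin.sum_univ_two] at this
      linarith
    have hce : c * e₀ = m * e₁ := by linear_combination e₀ * he₁ - e₁ * he₀
    have hprop : f 0 * e₁ = f 1 * e₀ := by
      have h0 : c * (f 0 * e₁ - f 1 * e₀) = 0 := by
        linear_combination e₁ * h1 - f 1 * hce
      rcases mul_eq_zero.mp h0 with h | h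
      · exact absurd h hc
      · linarith
    have hdvd : e₁ ∣ f 1 := by
      refine hcop.symm.dvd_of_dvd_mul_right ⟨f 0, ?_⟩
      linear_combination -hprop
    obtain ⟨μ, hμ⟩ := hdvd
    have h0' : f 0 = μ * e₀ := by
      have h2 : e₁ * (f 0 - μ * e₀) = 0 := by linear_combination hprop + e₀ * hμ
      rcases mul_eq_zero.mp h2 with h | h
      · exact absurd h he₁0
      · linarith
    have h1' : f 1 = μ * e₁ := by linarith [hμ]
    refine ⟨μ, ?_⟩
    funext i
    fin_cases i
    · simpa using h0'
    · simpa using h1'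
  obtain ⟨μ, hμ⟩ := key
  refine ⟨μ, ?_, ?_⟩
  · intro n
    induction n with
    | zero => simp
    | succ n ih =>
      rw [pow_succ, ← Matrix.mulVec_mulVec, hμ, Matrix.mulVec_smul, ih,
        pow_succ, smul_smul, mul_comm μ (μ ^ n)]
  · intro hdet hμ0
    apply hdet
    have h0 : B *ᵥ ![e₀, e₁] = 0 := by rw [hμ, hμ0]; simp
    have h1 : B.adjugate *ᵥ (B *ᵥ ![e₀, e₁]) = B.det • ![e₀, e₁] := by
      rw [Matrix.mulVec_mulVec, Matrix.adjugate_mul, Matrix.smul_mulVec,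
        Matrix.one_mulVec]
    rw [h0, Matrix.mulVec_zero] at h1
    have := congrFun h1.symm 1
    simp at this
    rcases this with h | h
    · exact h
    · exact absurd h he₁0

theorem stmt_6 (a b c u v w : ℤ) (hbc : b * c ≠ 0)
    (hgcd : Int.gcd a (Int.gcd b c) = 1)
    (hu : u ≠ 0) (hv : v ≠ 0) (hw : w ≠ 0)
    (huvw : Int.gcd u (Int.gcd v w) = 1)
    (hsq : ∃ k : ℤ, a ^ 2 + 4 * b * c = k ^ 2)
    (i j k : ℕ) :
    (∃ X Y Z : Matrix (Fin 2) (Fin 2) ℤ,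
      !![a, b; c, 0] * X = X * !![a, b; c, 0] ∧
      !![a, b; c, 0] * Y = Y * !![a, b; c, 0] ∧
      !![a, b; c, 0] * Z = Z * !![a, b; c, 0] ∧
      (X * Y * Z).det ≠ 0 ∧
      u • X ^ i + v • Y ^ j = w • Z ^ k) ↔
    (∃ x y z : ℤ, x * y * z ≠ 0 ∧ u * x ^ i + v * y ^ j = w * z ^ k) := by
  have hc : c ≠ 0 := fun h => hbc (by rw [h, mul_zero])
  constructor
  · rintro ⟨X, Y, Z, hX, hY, hZ, hdet, heq⟩
    obtain ⟨k₀, hk₀⟩ := hsq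
    -- a + k₀ is even
    obtain ⟨m, hm2⟩ : ∃ m : ℤ, a + k₀ = 2 * m := by
      rcases Int.even_or_odd (a + k₀) with ⟨r, hr⟩ | ⟨r, hr⟩
      · exact ⟨r, by omega⟩
      · exfalso
        have hexp : 4 * (r * r) + 4 * r + 1 - 4 * (a * r) - 2 * a = 4 * (b * c) := by
          linear_combination -hk₀ + (a - k₀ - 2 * r - 1) * hr
        generalize r * r = R at hexp
        generalize a * r = AR at hexp
        generalize b * c = BC at hexp
        omega
    have hm : m ^ 2 = a * m + b * c := by
      have h4 : 4 * (m ^ 2) = 4 * (a * m) + 4 * (b * c) := by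
        linear_combination -hk₀ + (a - k₀ - 2 * m) * hm2
      linarith
    set g : ℤ := (Int.gcd m c : ℤ) with hgdef
    have hgpos : 0 < Int.gcd m c := Int.gcd_pos_of_ne_zero_right m hc
    have hg : g ≠ 0 := by positivity
    have he₀ : m = g * (m / g) := (Int.mul_ediv_cancel' (Int.gcd_dvd_left m c)).symm
    have he₁ : c = g * (c / g) := (Int.mul_ediv_cancel' (Int.gcd_dvd_right m c)).symm
    have hcop : IsCoprime (m / g) (c / g) := by
      rw [Int.isCoprime_iff_gcd_eq_one]
      exact Int.gcd_div_gcd_div_gcd hgpos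
    obtain ⟨x, hxpow, hxdet⟩ := eig_lemma a b c m g (m / g) (c / g) hc hg he₀ he₁ hcop hm X hX
    obtain ⟨y, hypow, hydet⟩ := eig_lemma a b c m g (m / g) (c / g) hc hg he₀ he₁ hcop hm Y hY
    obtain ⟨z, hzpow, hzdet⟩ := eig_lemma a b c m g (m / g) (c / g) hc hg he₀ he₁ hcop hm Z hZ
    have he₁0 : c / g ≠ 0 := by
      intro h; rw [h, mul_zero] at he₁; exact hc he₁
    have hdets : X.det ≠ 0 ∧ Y.det ≠ 0 ∧ Z.det ≠ 0 := by
      rw [Matrix.det_mul, Matrix.det_mul] at hdet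
      refine ⟨fun h => hdet ?_, fun h => hdet ?_, fun h => hdet ?_⟩ <;>
        simp [h]
    refine ⟨x, y, z, ?_, ?_⟩
    · have hx0 := hxdet hdets.1
      have hy0 := hydet hdets.2.1
      have hz0 := hzdet hdets.2.2
      exact mul_ne_zero (mul_ne_zero hx0 hy0) hz0
    · have happ := congrArg (fun M => M *ᵥ ![m / g, c / g]) heq
      simp only [Matrix.add_mulVec, Matrix.smul_mulVec] at happ
      rw [hxpow i, hypow j, hzpow k] at happ
      have := congrFun happ 1
      simp [smul_smul] at this
      have hfact : (u * x ^ i + v * y ^ j - w * z ^ k) * (c / g) = 0 := by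
        linear_combination this
      rcases mul_eq_zero.mp hfact with h | h
      · linarith
      · exact absurd h he₁0
  · rintro ⟨x, y, z, hxyz, heq⟩
    refine ⟨x • 1, y • 1, z • 1, ?_, ?_, ?_, ?_, ?_⟩
    · rw [Matrix.mul_smul, Matrix.smul_mul, mul_one, one_mul]
    · rw [Matrix.mul_smul, Matrix.smul_mul, mul_one, one_mul]
    · rw [Matrix.mul_smul, Matrix.smul_mul, mul_one, one_mul]
    · have : (x • (1 : Matrix (Fin 2) (Fin 2) ℤ)) * (y • 1) * (z • 1)
          = (x * y * z) • 1 := by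
        rw [Matrix.smul_mul, Matrix.mul_smul, Matrix.smul_mul, Matrix.mul_smul,
          one_mul, mul_one, smul_smul, smul_smul]
        congr 1
        ring
      rw [this, Matrix.det_smul, Matrix.det_one, mul_one]
      exact pow_ne_zero _ hxyz
    · rw [smul_pow, smul_pow, smul_pow, one_pow, one_pow, one_pow,
        smul_smul, smul_smul, smul_smul, ← heq, add_smul]
end

section
/- Let A = !![a, b; c, 0] be a 2×2 integer matrix with b*c ≠ 0 and gcd(a, gcd(b, c)) = 1. Suppose a² + 4*b*c is not a perfect square, and let D be the unique squarefree integer with a² + 4*b*c = m²*D for some positive integer m. For natural numbers i, j, k and nonzero coprime-as-a-triple integers u, v, w, the equation u•X^i + v•Y^j = w•Z^k has a non-trivial solution (det(X*Y*Z) ≠ 0) in the centralizer C(A) if and only if there exist algebraic integers x, y, z in ℚ(√D), each of the form (s + t√D)/2 with s, t ∈ ℤ and m ∣ t, satisfying x*y*z ≠ 0 and u*x^i + v*y^j = w*z^k. -/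
open Matrix Polynomial

private def rep (a b c p q : ℤ) : Matrix (Fin 2) (Fin 2) ℤ := !![p + q*a, q*b; q*c, p]

private lemma rep_comm (a b c p q : ℤ) :
    !![a, b; c, 0] * rep a b c p q = rep a b c p q * !![a, b; c, 0] := by
  ext i j
  fin_cases i <;> fin_cases j <;>
    simp [rep, Matrix.mul_apply, Fin.sum_univ_two] <;> ring

private lemma rep_mul (a b c p q p' q' : ℤ) :
    rep a b c p q * rep a b c p' q' =
      rep a b c (p*p' + q*q'*(b*c)) (p*q' + q*p' + q*q'*a) := by
  ext i j
  fin_cases i <;> fin_cases j <;>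
    simp [rep, Matrix.mul_apply, Fin.sum_univ_two] <;> ring

private lemma rep_smul (a b c u p q : ℤ) :
    u • rep a b c p q = rep a b c (u*p) (u*q) := by
  ext i j
  fin_cases i <;> fin_cases j <;> simp [rep] <;> ring

private lemma rep_add (a b c p q p' q' : ℤ) :
    rep a b c p q + rep a b c p' q' = rep a b c (p+p') (q+q') := by
  ext i j
  fin_cases i <;> fin_cases j <;> simp [rep] <;> ring

private lemma rep_one (a b c : ℤ) : rep a b c 1 0 = 1 := by
  ext i j; fin_cases i <;> fin_cases j <;> simp [rep, Matrix.one_apply]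

private lemma rep_det (a b c p q : ℤ) :
    (rep a b c p q).det = p*p + p*q*a - q*q*(b*c) := by
  simp [rep, Matrix.det_fin_two_of]; ring

private lemma cmul {a b c : ℤ} {L : ℂ} (hL : L*L = (a:ℂ)*L + (b:ℂ)*(c:ℂ)) (p q p' q' : ℤ) :
    ((p:ℂ) + q*L) * ((p':ℂ) + q'*L)
      = ((p*p' + q*q'*(b*c) : ℤ) : ℂ) + ((p*q' + q*p' + q*q'*a : ℤ) : ℂ) * L := by
  push_cast
  linear_combination ((q:ℂ)*(q':ℂ)) * hL

private lemma rep_pow {a b c : ℤ} {L : ℂ} (hL : L*L = (a:ℂ)*L + (b:ℂ)*(c:ℂ)) (n : ℕ) (p q : ℤ) :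
    ∃ P Q : ℤ, rep a b c p q ^ n = rep a b c P Q ∧ ((p:ℂ) + q*L)^n = (P:ℂ) + (Q:ℂ)*L := by
  induction n with
  | zero => exact ⟨1, 0, by simp [rep_one], by simp⟩
  | succ n ih =>
    obtain ⟨P, Q, h1, h2⟩ := ih
    refine ⟨P*p + Q*q*(b*c), P*q + Q*p + Q*q*a, ?_, ?_⟩
    · rw [pow_succ, h1, rep_mul]
    · rw [pow_succ, h2, cmul hL]

private lemma rep_inj {a b c : ℤ} (hb : b ≠ 0) {p q p' q' : ℤ}
    (h : rep a b c p q = rep a b c p' q') : p = p' ∧ q = q' := by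
  have h1 := congrFun (congrFun h 1) 1
  have h2 := congrFun (congrFun h 0) 1
  simp [rep] at h1 h2
  refine ⟨h1, ?_⟩
  rcases h2 with h2 | h2
  · exact h2
  · exact absurd h2 hb

private lemma comm_to_rep {a b c : ℤ} (hgcd : Int.gcd a (Int.gcd b c) = 1)
    {X : Matrix (Fin 2) (Fin 2) ℤ} (hX : !![a, b; c, 0] * X = X * !![a, b; c, 0]) :
    ∃ p q : ℤ, X = rep a b c p q := by
  have e00 := congrFun (congrFun hX 0) 0
  have e01 := congrFun (congrFun hX 0) 1
  have e10 := congrFun (congrFun hX 1) 0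
  have e11 := congrFun (congrFun hX 1) 1
  simp [Matrix.mul_apply, Fin.sum_univ_two] at e00 e01 e10 e11
  obtain ⟨e, f, g, hbez⟩ : ∃ e f g : ℤ, a*e + b*f + c*g = 1 := by
    have h1 := Int.gcd_eq_gcd_ab a (Int.gcd b c)
    have h2 := Int.gcd_eq_gcd_ab b c
    rw [hgcd] at h1
    refine ⟨Int.gcdA a (Int.gcd b c), Int.gcdA b c * Int.gcdB a (Int.gcd b c),
      Int.gcdB b c * Int.gcdB a (Int.gcd b c), ?_⟩
    push_cast at h1
    linear_combination -h1 - Int.gcdB a (Int.gcd b c) * h2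
  have hbd : b*(X 0 0 - X 1 1) = a * X 0 1 := by linear_combination -e01
  have hcd : c*(X 0 0 - X 1 1) = a * X 1 0 := by linear_combination e10
  have hcb : c * X 0 1 = b * X 1 0 := by linear_combination e11
  set q : ℤ := e*(X 0 0 - X 1 1) + f * X 0 1 + g * X 1 0 with hq
  have qa : q * a = X 0 0 - X 1 1 := by
    rw [hq]; linear_combination (-f) * hbd + (-g) * hcd + (X 0 0 - X 1 1) * hbez
  have qb : q * b = X 0 1 := by
    rw [hq]; linear_combination e * hbd + (-g) * hcb + (X 0 1) * hbez
  have qc : q * c = X 1 0 := by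
    rw [hq]; linear_combination e * hcd + f * hcb + (X 1 0) * hbez
  refine ⟨X 1 1, q, ?_⟩
  ext i' j'
  fin_cases i' <;> fin_cases j' <;> simp [rep] <;> linarith [qa, qb, qc]

private lemma isIntegral_of_quad (s n : ℤ) (x : ℂ) (h : x^2 - (s:ℂ)*x + (n:ℂ) = 0) :
    IsIntegral ℤ x := by
  refine ⟨X^2 + (C (-s) * X + C n),
    Polynomial.monic_X_pow_add (n := 2)
      (lt_of_le_of_lt (Polynomial.degree_linear_le (a := -s) (b := n)) (by norm_num)), ?_⟩
  simp only [eval₂_add, eval₂_mul, eval₂_pow, eval₂_X, eval₂_C]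
  rw [show (algebraMap ℤ ℂ) (-s) = -(s:ℂ) by simp, show (algebraMap ℤ ℂ) n = (n:ℂ) by simp]
  linear_combination h

private lemma int_of_isIntegral_div4 (N : ℤ) (h : IsIntegral ℤ ((N : ℂ)/4)) : (4:ℤ) ∣ N := by
  have key : IsIntegral ℤ ((N : ℚ)/4) := by
    have hmap : (algebraMap ℚ ℂ).toIntAlgHom ((N : ℚ)/4) = (N : ℂ)/4 := by
      simp [RingHom.toIntAlgHom]
    exact (isIntegral_algHom_iff (algebraMap ℚ ℂ).toIntAlgHom (algebraMap ℚ ℂ).injective).mp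
      (hmap ▸ h)
  obtain ⟨y, hy⟩ := IsIntegrallyClosed.isIntegral_iff.mp key
  rw [eq_intCast] at hy
  refine ⟨y, ?_⟩
  have h4 : (N : ℚ) = 4 * y := by rw [hy]; ring
  exact_mod_cast h4

private lemma two_dvd_of_four_dvd (uu vv : ℤ) (h : (4:ℤ) ∣ uu^2 - vv^2) : (2:ℤ) ∣ uu - vv := by
  have h2 : (2:ℤ) ∣ (uu - vv) * (uu + vv) := by
    have : (2:ℤ) ∣ uu^2 - vv^2 := dvd_trans (by norm_num) h
    have e : uu^2 - vv^2 = (uu - vv) * (uu + vv) := by ring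
    rwa [e] at this
  rcases (Int.prime_two.dvd_mul.mp h2) with h3 | h3
  · exact h3
  · omega

private lemma key_irr (a b c D : ℤ) (m : ℕ) (hm : 0 < m)
    (hsq : ¬ ∃ k : ℤ, a ^ 2 + 4 * b * c = k ^ 2)
    (hD : Squarefree D) (hmD : a ^ 2 + 4 * b * c = (m : ℤ) ^ 2 * D)
    (r : ℂ) (hr : r ^ 2 = (D : ℂ)) (t n : ℤ)
    (h : (t:ℂ) * ((m:ℂ) * r) = (n:ℂ)) : t = 0 ∧ n = 0 := by
  have hint : t^2 * (m:ℤ)^2 * D = n^2 := by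
    have hc : ((t^2 * (m:ℤ)^2 * D : ℤ) : ℂ) = ((n^2 : ℤ) : ℂ) := by
      push_cast
      linear_combination ((t:ℂ) * ((m:ℂ)*r) + (n:ℂ)) * h - (t:ℂ)^2 * (m:ℂ)^2 * hr
    exact_mod_cast hc
  by_cases ht : t = 0
  · subst ht
    refine ⟨rfl, ?_⟩
    have hn : (n:ℂ) = 0 := by simpa using h.symm
    exact_mod_cast hn
  · exfalso
    have hq' : t * (m:ℤ) ≠ 0 := mul_ne_zero ht (by exact_mod_cast hm.ne')
    have hdvd : (t * (m:ℤ))^2 ∣ n^2 := ⟨D, by linear_combination -hint⟩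
    have hdvd2 : t * (m:ℤ) ∣ n := (Int.pow_dvd_pow_iff two_ne_zero).mp hdvd
    obtain ⟨e, he⟩ := hdvd2
    have hDe : D = e^2 := by
      have h2 : (t*(m:ℤ))^2 * D = (t*(m:ℤ))^2 * e^2 := by
        linear_combination hint + ((n:ℤ) + t*(m:ℤ)*e) * he
      exact mul_left_cancel₀ (pow_ne_zero 2 hq') h2
    have hYe : IsUnit e := hD e (by rw [hDe]; exact ⟨1, by ring⟩)
    have hD1 : D = 1 := by rcases Int.isUnit_iff.mp hYe with h1|h1 <;> rw [hDe, h1] <;> ring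
    exact hsq ⟨m, by rw [hmD, hD1]; ring⟩

theorem stmt_7 (a b c u v w D : ℤ) (m : ℕ) (hm : 0 < m) (hbc : b * c ≠ 0)
    (hgcd : Int.gcd a (Int.gcd b c) = 1)
    (hu : u ≠ 0) (hv : v ≠ 0) (hw : w ≠ 0)
    (huvw : Int.gcd u (Int.gcd v w) = 1)
    (hsq : ¬ ∃ k : ℤ, a ^ 2 + 4 * b * c = k ^ 2)
    (hD : Squarefree D) (hmD : a ^ 2 + 4 * b * c = (m : ℤ) ^ 2 * D)
    (i j k : ℕ) (r : ℂ) (hr : r ^ 2 = (D : ℂ)) :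
    (∃ X Y Z : Matrix (Fin 2) (Fin 2) ℤ,
      !![a, b; c, 0] * X = X * !![a, b; c, 0] ∧
      !![a, b; c, 0] * Y = Y * !![a, b; c, 0] ∧
      !![a, b; c, 0] * Z = Z * !![a, b; c, 0] ∧
      (X * Y * Z).det ≠ 0 ∧
      u • X ^ i + v • Y ^ j = w • Z ^ k) ↔
    (∃ x y z : ℂ,
      (∃ s t : ℤ, (m : ℤ) ∣ t ∧ IsIntegral ℤ x ∧ x = ((s : ℂ) + (t : ℂ) * r) / 2) ∧
      (∃ s t : ℤ, (m : ℤ) ∣ t ∧ IsIntegral ℤ y ∧ y = ((s : ℂ) + (t : ℂ) * r) / 2) ∧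
      (∃ s t : ℤ, (m : ℤ) ∣ t ∧ IsIntegral ℤ z ∧ z = ((s : ℂ) + (t : ℂ) * r) / 2) ∧
      x * y * z ≠ 0 ∧
      (u : ℂ) * x ^ i + (v : ℂ) * y ^ j = (w : ℂ) * z ^ k) := by
  have hb : b ≠ 0 := left_ne_zero_of_mul hbc
  obtain ⟨L, hLdef⟩ : ∃ L : ℂ, L = ((a:ℂ) + (m:ℂ)*r)/2 := ⟨_, rfl⟩
  have hDC : ((a:ℂ))^2 + 4*(b:ℂ)*(c:ℂ) = (m:ℂ)^2*(D:ℂ) := by exact_mod_cast hmD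
  have hL : L*L = (a:ℂ)*L + (b:ℂ)*(c:ℂ) := by
    rw [hLdef]
    field_simp
    linear_combination ((m:ℂ)^2*hr - hDC)
  have kirr : ∀ t n : ℤ, (t:ℂ) * ((m:ℂ) * r) = (n:ℂ) → t = 0 ∧ n = 0 :=
    key_irr a b c D m hm hsq hD hmD r hr
  have cu : ∀ P Q P' Q' : ℤ, (P:ℂ) + (Q:ℂ)*L = (P':ℂ) + (Q':ℂ)*L → P = P' ∧ Q = Q' := by
    intro P Q P' Q' h
    have h2 : ((Q - Q' : ℤ):ℂ) * ((m:ℂ)*r) = ((2*(P'-P) - (Q-Q')*a : ℤ):ℂ) := by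
      rw [hLdef] at h
      push_cast
      linear_combination 2*h
    obtain ⟨hq0, hn0⟩ := kirr _ _ h2
    have hPP : 2*(P'-P) = 0 := by linear_combination hn0 + a*hq0
    constructor <;> omega
  have detC : ∀ P Q : ℤ, (((rep a b c P Q).det : ℤ) : ℂ)
      = ((P:ℂ) + (Q:ℂ)*L) * ((P:ℂ) + (Q:ℂ)*((a:ℂ) - L)) := by
    intro P Q
    rw [rep_det]
    push_cast
    linear_combination (Q:ℂ)^2 * hL
  have detzero : ∀ P Q : ℤ, (rep a b c P Q).det = 0 ↔ ((P:ℂ) + (Q:ℂ)*L = 0) := by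
    intro P Q
    constructor
    · intro h
      have h0 : ((P:ℂ) + (Q:ℂ)*L) * ((P:ℂ) + (Q:ℂ)*((a:ℂ) - L)) = 0 := by
        rw [← detC, h]; simp
      rcases mul_eq_zero.mp h0 with h1 | h1
      · exact h1
      · have h2 : ((-Q : ℤ):ℂ) * ((m:ℂ)*r) = ((-(2*P + Q*a) : ℤ):ℂ) := by
          rw [hLdef] at h1
          push_cast
          linear_combination 2*h1
        obtain ⟨hq0, hn0⟩ := kirr _ _ h2
        have hQ0 : Q = 0 := by omega
        have hP2 : 2*P = 0 := by linear_combination -hn0 + a*hq0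
        have hP0 : P = 0 := by omega
        simp [hQ0, hP0]
    · intro h
      have h3 : (((rep a b c P Q).det : ℤ) : ℂ) = 0 := by rw [detC, h]; ring
      exact_mod_cast h3
  have exform : ∀ p q : ℤ, (∃ s t : ℤ, (m:ℤ) ∣ t ∧ IsIntegral ℤ ((p:ℂ)+(q:ℂ)*L) ∧
      ((p:ℂ)+(q:ℂ)*L) = ((s:ℂ)+(t:ℂ)*r)/2) := by
    intro p q
    refine ⟨2*p + q*a, q*(m:ℤ), ⟨q, mul_comm q (m:ℤ)⟩, ?_, ?_⟩
    · apply isIntegral_of_quad (2*p+q*a) (p*p + p*q*a - q*q*(b*c))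
      push_cast
      linear_combination (q:ℂ)^2 * hL
    · rw [hLdef]; push_cast; ring
  have topq : ∀ (x : ℂ) (s t : ℤ), (m:ℤ) ∣ t → IsIntegral ℤ x → x = ((s:ℂ)+(t:ℂ)*r)/2 →
      ∃ p q : ℤ, x = (p:ℂ) + (q:ℂ)*L := by
    intro x s t hmt hint hxe
    obtain ⟨q, rfl⟩ := hmt
    have hsint : IsIntegral ℤ ((s:ℤ):ℂ) := by
      have h5 := isIntegral_algebraMap (R := ℤ) (A := ℂ) (x := s)
      rwa [algebraMap_int_eq, eq_intCast] at h5
    have hNdvd : (4:ℤ) ∣ ((m:ℤ)*q)^2*D - s^2 := by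
      apply int_of_isIntegral_div4
      have hval : ((((m:ℤ)*q)^2*D - s^2 : ℤ) : ℂ)/4 = x^2 - (s:ℂ)*x := by
        rw [hxe]
        push_cast
        linear_combination (-((m:ℂ)*(q:ℂ))^2/4) * hr
      rw [hval]
      exact (hint.pow 2).sub (hsint.mul hint)
    have h4qa : (4:ℤ) ∣ (q*a)^2 - s^2 := by
      obtain ⟨kk, hk⟩ := hNdvd
      exact ⟨kk - q^2*(b*c), by linear_combination hk + q^2 * hmD⟩
    obtain ⟨p, hp⟩ := two_dvd_of_four_dvd (q*a) s h4qa
    refine ⟨-p, q, ?_⟩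
    have hpc : ((q*a - s : ℤ):ℂ) = 2*(p:ℂ) := by exact_mod_cast hp
    rw [hxe, hLdef]
    push_cast at hpc ⊢
    linear_combination (-(1:ℂ)/2) * hpc
  constructor
  · rintro ⟨X, Y, Z, hXc, hYc, hZc, hdet, heq⟩
    obtain ⟨px, qx, rfl⟩ := comm_to_rep hgcd hXc
    obtain ⟨py, qy, rfl⟩ := comm_to_rep hgcd hYc
    obtain ⟨pz, qz, rfl⟩ := comm_to_rep hgcd hZc
    obtain ⟨PX, QX, hXp, hXv⟩ := rep_pow hL i px qx
    obtain ⟨PY, QY, hYp, hYv⟩ := rep_pow hL j py qy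
    obtain ⟨PZ, QZ, hZp, hZv⟩ := rep_pow hL k pz qz
    rw [hXp, hYp, hZp, rep_smul, rep_smul, rep_smul, rep_add] at heq
    obtain ⟨hP, hQ⟩ := rep_inj hb heq
    refine ⟨(px:ℂ)+(qx:ℂ)*L, (py:ℂ)+(qy:ℂ)*L, (pz:ℂ)+(qz:ℂ)*L,
      exform px qx, exform py qy, exform pz qz, ?_, ?_⟩
    · rw [rep_mul, rep_mul] at hdet
      intro h0
      apply hdet
      rw [detzero]
      rw [cmul hL, cmul hL] at h0
      exact h0
    · rw [hXv, hYv, hZv]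
      have hPC : (u:ℂ)*(PX:ℂ) + (v:ℂ)*(PY:ℂ) = (w:ℂ)*(PZ:ℂ) := by exact_mod_cast hP
      have hQC : (u:ℂ)*(QX:ℂ) + (v:ℂ)*(QY:ℂ) = (w:ℂ)*(QZ:ℂ) := by exact_mod_cast hQ
      linear_combination hPC + L * hQC
  · rintro ⟨x, y, z, ⟨sx, tx, hmx, hix, hxe⟩, ⟨sy, ty, hmy, hiy, hye⟩,
      ⟨sz, tz, hmz, hiz, hze⟩, hne, heq⟩
    obtain ⟨px, qx, hx⟩ := topq x sx tx hmx hix hxe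
    obtain ⟨py, qy, hy⟩ := topq y sy ty hmy hiy hye
    obtain ⟨pz, qz, hz⟩ := topq z sz tz hmz hiz hze
    subst hx; subst hy; subst hz
    obtain ⟨PX, QX, hXp, hXv⟩ := rep_pow hL i px qx
    obtain ⟨PY, QY, hYp, hYv⟩ := rep_pow hL j py qy
    obtain ⟨PZ, QZ, hZp, hZv⟩ := rep_pow hL k pz qz
    refine ⟨rep a b c px qx, rep a b c py qy, rep a b c pz qz,
      rep_comm a b c px qx, rep_comm a b c py qy, rep_comm a b c pz qz, ?_, ?_⟩
    · rw [rep_mul, rep_mul]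
      intro h0
      apply hne
      rw [cmul hL, cmul hL]
      exact (detzero _ _).mp h0
    · rw [hXp, hYp, hZp, rep_smul, rep_smul, rep_smul, rep_add]
      rw [hXv, hYv, hZv] at heq
      have hc2 : ((u*PX + v*PY : ℤ):ℂ) + ((u*QX + v*QY : ℤ):ℂ)*L
          = ((w*PZ : ℤ):ℂ) + ((w*QZ : ℤ):ℂ)*L := by
        push_cast
        linear_combination heq
      obtain ⟨h1, h2⟩ := cu _ _ _ _ hc2
      rw [h1, h2]
end

section
/- Let A = !![a, b; c, 0] be a 2×2 integer matrix with b*c ≠ 0 and gcd(a, gcd(b, c)) = 1. Let K = ℚ(√(a² + 4*b*c)) with ring of integers O_K, and let n be a natural number and u, v, w nonzero integers with gcd(u, gcd(v, w)) = 1. Then the equation u•X^n + v•Y^n = w•Z^n has a solution X, Y, Z ∈ C(A) with det(X*Y*Z) ≠ 0 if and only if the equation u*x^n + v*y^n = w*z^n has a solution x, y, z ∈ O_K with x*y*z ≠ 0. -/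
private theorem pow_eig8 {R : Type*} [CommRing R] (M : Matrix (Fin 2) (Fin 2) R) (x : R)
    (vv : Fin 2 → R) (h : M.mulVec vv = x • vv) (n : ℕ) :
    (M ^ n).mulVec vv = x ^ n • vv := by
  induction n with
  | zero => simp [Matrix.one_mulVec]
  | succ k ih =>
      rw [pow_succ, ← Matrix.mulVec_mulVec, h, Matrix.mulVec_smul, ih, pow_succ]
      rw [smul_smul, mul_comm]

private theorem eig_aux8 (a b c : ℤ) (ℓ : ℂ) (hℓ : ℓ ^ 2 = a * ℓ + b * c) (p q : ℤ) :
    (!![(p : ℂ) + q * a, q * b; q * c, (p : ℂ)]).mulVec ![(b : ℂ), ℓ - a]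
      = ((p : ℂ) + q * ℓ) • ![(b : ℂ), ℓ - a] := by
  funext i
  fin_cases i <;>
    simp [Matrix.mulVec, dotProduct, Fin.sum_univ_two] <;>
    first
      | linear_combination (-q : ℂ) * hℓ
      | linear_combination (-2 * q : ℂ) * hℓ
      | ring

private theorem cent_aux8 (a b c : ℤ) (hgcd : Int.gcd a (Int.gcd b c) = 1)
    (M : Matrix (Fin 2) (Fin 2) ℤ) (h : !![a,b;c,0] * M = M * !![a,b;c,0]) :
    ∃ p q : ℤ, M = !![p + q*a, q*b; q*c, p] := by
  set m00 := M 0 0 with h00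
  set m01 := M 0 1 with h01
  set m10 := M 1 0 with h10
  set m11 := M 1 1 with h11
  have hM : M = !![m00, m01; m10, m11] := by
    rw [h00, h01, h10, h11]; exact Matrix.etaExpand_eq M |>.symm
  rw [hM] at h
  rw [Matrix.mul_fin_two, Matrix.mul_fin_two] at h
  have e1 : b * m10 = c * m01 := by
    have := congrFun (congrFun h 0) 0
    simp at this; linarith
  have e2 : b * (m00 - m11) = a * m01 := by
    have := congrFun (congrFun h 0) 1
    simp at this; linarith
  have e3 : c * (m00 - m11) = a * m10 := by
    have := congrFun (congrFun h 1) 0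
    simp at this; linarith
  set gz : ℤ := (Int.gcd b c : ℤ) with hg
  have hbez1 : gz = b * Int.gcdA b c + c * Int.gcdB b c := Int.gcd_eq_gcd_ab b c
  have hbez2 : (1 : ℤ) = a * Int.gcdA a gz + gz * Int.gcdB a gz := by
    have h2 := Int.gcd_eq_gcd_ab a gz
    rw [hgcd] at h2
    exact_mod_cast h2
  set α := Int.gcdA a gz
  set β := Int.gcdA b c * Int.gcdB a gz
  set γ := Int.gcdB b c * Int.gcdB a gz
  have hbez : a * α + b * β + c * γ = 1 := by
    have h3 : a * α + (b * Int.gcdA b c + c * Int.gcdB b c) * Int.gcdB a gz = 1 := by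
      rw [← hbez1]; linarith [hbez2]
    linear_combination h3
  refine ⟨m11, (m00 - m11) * α + m01 * β + m10 * γ, ?_⟩
  have hqa : ((m00 - m11) * α + m01 * β + m10 * γ) * a = m00 - m11 := by
    linear_combination (m00 - m11) * hbez - β * e2 - γ * e3
  have hqb : ((m00 - m11) * α + m01 * β + m10 * γ) * b = m01 := by
    linear_combination m01 * hbez + α * e2 + γ * e1
  have hqc : ((m00 - m11) * α + m01 * β + m10 * γ) * c = m10 := by
    linear_combination m10 * hbez + α * e3 - β * e1
  rw [hM]
  ext i j
  fin_cases i <;> fin_cases j <;> simp <;> linarith [hqa, hqb, hqc]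

theorem stmt_8 (a b c u v w : ℤ) (hbc : b * c ≠ 0)
    (hgcd : Int.gcd a (Int.gcd b c) = 1)
    (hu : u ≠ 0) (hv : v ≠ 0) (hw : w ≠ 0)
    (huvw : Int.gcd u (Int.gcd v w) = 1)
    (n : ℕ) (r : ℂ) (hr : r ^ 2 = ((a ^ 2 + 4 * b * c : ℤ) : ℂ)) :
    (∃ X Y Z : Matrix (Fin 2) (Fin 2) ℤ,
      !![a, b; c, 0] * X = X * !![a, b; c, 0] ∧
      !![a, b; c, 0] * Y = Y * !![a, b; c, 0] ∧
      !![a, b; c, 0] * Z = Z * !![a, b; c, 0] ∧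
      (X * Y * Z).det ≠ 0 ∧
      u • X ^ n + v • Y ^ n = w • Z ^ n) ↔
    (∃ x y z : ℂ,
      (IsIntegral ℤ x ∧ ∃ s t : ℚ, x = (s : ℂ) + (t : ℂ) * r) ∧
      (IsIntegral ℤ y ∧ ∃ s t : ℚ, y = (s : ℂ) + (t : ℂ) * r) ∧
      (IsIntegral ℤ z ∧ ∃ s t : ℚ, z = (s : ℂ) + (t : ℂ) * r) ∧
      x * y * z ≠ 0 ∧
      (u : ℂ) * x ^ n + (v : ℂ) * y ^ n = (w : ℂ) * z ^ n) := by
  have hb : b ≠ 0 := fun h => hbc (by rw [h]; ring)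
  have hc : c ≠ 0 := fun h => hbc (by rw [h]; ring)
  have hbC : (b : ℂ) ≠ 0 := Int.cast_ne_zero.mpr hb
  have hr' : r ^ 2 = (a : ℂ) ^ 2 + 4 * b * c := by push_cast at hr; exact hr
  set ℓ : ℂ := ((a : ℂ) + r) / 2 with hℓdef
  have hℓ : ℓ ^ 2 = a * ℓ + b * c := by
    rw [hℓdef]; linear_combination (1/4 : ℂ) * hr'
  set vv : Fin 2 → ℂ := ![(b : ℂ), ℓ - a] with hvv
  set F : Matrix (Fin 2) (Fin 2) ℤ →+* Matrix (Fin 2) (Fin 2) ℂ :=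
    (Int.castRingHom ℂ).mapMatrix with hFdef
  have hFmat : ∀ p q : ℤ, F !![p + q*a, q*b; q*c, p] = !![(p:ℂ)+q*a, q*b; q*c, (p:ℂ)] := by
    intro p q
    ext i j
    fin_cases i <;> fin_cases j <;>
      simp [hFdef, RingHom.mapMatrix_apply, Matrix.map_apply] <;> push_cast <;> ring
  have hdetfac : ∀ p q : ℤ,
      (((!![p + q*a, q*b; q*c, p] : Matrix (Fin 2) (Fin 2) ℤ).det : ℤ) : ℂ)
        = ((p:ℂ) + q*ℓ) * ((p:ℂ) + q*((a:ℂ) - ℓ)) := by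
    intro p q
    rw [Matrix.det_fin_two_of]
    push_cast
    linear_combination (q : ℂ)^2 * hℓ
  have hcomm : ∀ p q : ℤ,
      !![a, b; c, 0] * !![p + q*a, q*b; q*c, p] = !![p + q*a, q*b; q*c, p] * !![a, b; c, 0] := by
    intro p q
    rw [Matrix.mul_fin_two, Matrix.mul_fin_two]
    ext i j
    fin_cases i <;> fin_cases j <;> simp <;> ring
  constructor
  · rintro ⟨X, Y, Z, hX, hY, hZ, hdet, heq⟩
    obtain ⟨p1, q1, hXr⟩ := cent_aux8 a b c hgcd X hX
    obtain ⟨p2, q2, hYr⟩ := cent_aux8 a b c hgcd Y hY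
    obtain ⟨p3, q3, hZr⟩ := cent_aux8 a b c hgcd Z hZ
    have hℓint : IsIntegral ℤ ℓ := by
      refine ⟨Polynomial.X ^ 2 - (Polynomial.C a * Polynomial.X + Polynomial.C (b * c)),
        Polynomial.monic_X_pow_sub ?_, ?_⟩
      · refine lt_of_le_of_lt (Polynomial.degree_add_le _ _) (max_lt ?_ ?_)
        · exact lt_of_le_of_lt (Polynomial.degree_C_mul_X_le a) (by decide)
        · exact lt_of_le_of_lt (Polynomial.degree_C_le) (by decide)
      · simp only [Polynomial.eval₂_sub, Polynomial.eval₂_add, Polynomial.eval₂_mul,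
          Polynomial.eval₂_pow, Polynomial.eval₂_X, Polynomial.eval₂_C]
        simp only [eq_intCast, Int.cast_mul]
        linear_combination hℓ
    have hint : ∀ p q : ℤ, IsIntegral ℤ ((p:ℂ) + q*ℓ) := by
      intro p q
      have h1 : IsIntegral ℤ ((p:ℤ) : ℂ) := isIntegral_algebraMap (x := p)
      have h2 : IsIntegral ℤ ((q:ℤ) : ℂ) := isIntegral_algebraMap (x := q)
      exact h1.add (h2.mul hℓint)
    have hst : ∀ p q : ℤ, ∃ s t : ℚ, (p:ℂ) + q*ℓ = (s:ℂ) + (t:ℂ)*r := by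
      intro p q
      refine ⟨(p:ℚ) + q*a/2, (q:ℚ)/2, ?_⟩
      rw [hℓdef]; push_cast; ring
    -- nonzero determinants
    have hdX : X.det ≠ 0 := by
      intro h0; apply hdet; rw [Matrix.det_mul, Matrix.det_mul, h0]; ring
    have hdY : Y.det ≠ 0 := by
      intro h0; apply hdet; rw [Matrix.det_mul, Matrix.det_mul, h0]; ring
    have hdZ : Z.det ≠ 0 := by
      intro h0; apply hdet; rw [Matrix.det_mul, Matrix.det_mul, h0]; ring
    have hne : ∀ (p q : ℤ) (M : Matrix (Fin 2) (Fin 2) ℤ), M = !![p + q*a, q*b; q*c, p] →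
        M.det ≠ 0 → (p:ℂ) + q*ℓ ≠ 0 := by
      intro p q M hMr hMd h0
      apply hMd
      have : ((M.det : ℤ) : ℂ) = 0 := by rw [hMr, hdetfac, h0, zero_mul]
      exact_mod_cast this
    refine ⟨(p1:ℂ) + q1*ℓ, (p2:ℂ) + q2*ℓ, (p3:ℂ) + q3*ℓ,
      ⟨hint p1 q1, hst p1 q1⟩, ⟨hint p2 q2, hst p2 q2⟩, ⟨hint p3 q3, hst p3 q3⟩, ?_, ?_⟩
    · exact mul_ne_zero (mul_ne_zero (hne p1 q1 X hXr hdX) (hne p2 q2 Y hYr hdY))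
        (hne p3 q3 Z hZr hdZ)
    · -- the equation
      have hFeq := congrArg F heq
      simp only [map_add, map_zsmul, map_pow] at hFeq
      rw [hXr, hYr, hZr, hFmat, hFmat, hFmat] at hFeq
      have h0 := congrArg (fun M : Matrix (Fin 2) (Fin 2) ℂ => M.mulVec vv) hFeq
      simp only [Matrix.add_mulVec, Matrix.smul_mulVec] at h0
      rw [pow_eig8 _ _ _ (eig_aux8 a b c ℓ hℓ p1 q1) n,
          pow_eig8 _ _ _ (eig_aux8 a b c ℓ hℓ p2 q2) n,
          pow_eig8 _ _ _ (eig_aux8 a b c ℓ hℓ p3 q3) n] at h0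
      have h1 := congrFun h0 0
      simp only [hvv, Pi.add_apply, Pi.smul_apply, Matrix.cons_val_zero, smul_eq_mul] at h1
      simp only [zsmul_eq_mul] at h1
      apply mul_right_cancel₀ hbC
      linear_combination h1
  · rintro ⟨x, y, z, ⟨hxint, s1, t1, hx⟩, ⟨hyint, s2, t2, hy⟩, ⟨hzint, s3, t3, hz⟩, hne, heq⟩
    have hx0 : x ≠ 0 := fun h => hne (by rw [h]; ring)
    have hy0 : y ≠ 0 := fun h => hne (by rw [h]; ring)
    have hz0 : z ≠ 0 := fun h => hne (by rw [h]; ring)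
    by_cases hrat : ∃ ρ : ℚ, r = (ρ : ℂ)
    · obtain ⟨ρ, hρ⟩ := hrat
      set x' : ℚ := s1 + t1 * ρ with hx'def
      set y' : ℚ := s2 + t2 * ρ with hy'def
      set z' : ℚ := s3 + t3 * ρ with hz'def
      have hx' : x = (x' : ℂ) := by rw [hx, hρ, hx'def]; push_cast; ring
      have hy' : y = (y' : ℂ) := by rw [hy, hρ, hy'def]; push_cast; ring
      have hz' : z = (z' : ℂ) := by rw [hz, hρ, hz'def]; push_cast; ring
      have hx'0 : x' ≠ 0 := by
        intro h0; apply hx0; rw [hx', h0]; norm_num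
      have hy'0 : y' ≠ 0 := by
        intro h0; apply hy0; rw [hy', h0]; norm_num
      have hz'0 : z' ≠ 0 := by
        intro h0; apply hz0; rw [hz', h0]; norm_num
      clear_value x' y' z'
      have hQ : (u : ℚ) * x' ^ n + (v : ℚ) * y' ^ n = (w : ℚ) * z' ^ n := by
        have h2 : (((u : ℚ) * x' ^ n + (v : ℚ) * y' ^ n : ℚ) : ℂ)
            = (((w : ℚ) * z' ^ n : ℚ) : ℂ) := by
          push_cast
          rw [← hx', ← hy', ← hz']
          exact heq
        exact_mod_cast h2
      set px : ℤ := x'.num * y'.den * z'.den with hpxdef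
      set py : ℤ := x'.den * y'.num * z'.den with hpydef
      set pz : ℤ := x'.den * y'.den * z'.num with hpzdef
      set N : ℤ := (x'.den : ℤ) * y'.den * z'.den with hNdef
      have hpx : (px : ℚ) = x' * (N : ℚ) := by
        rw [hpxdef, hNdef]; push_cast
        linear_combination ((y'.den : ℚ) * z'.den) * (Rat.den_mul_eq_num x').symm
      have hpy : (py : ℚ) = y' * (N : ℚ) := by
        rw [hpydef, hNdef]; push_cast
        linear_combination ((x'.den : ℚ) * z'.den) * (Rat.den_mul_eq_num y').symm
      have hpz : (pz : ℚ) = z' * (N : ℚ) := by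
        rw [hpzdef, hNdef]; push_cast
        linear_combination ((x'.den : ℚ) * y'.den) * (Rat.den_mul_eq_num z').symm
      clear_value px py pz N
      have hZeq : u * px ^ n + v * py ^ n = w * pz ^ n := by
        have h2 : ((u * px ^ n + v * py ^ n : ℤ) : ℚ) = ((w * pz ^ n : ℤ) : ℚ) := by
          push_cast
          rw [hpx, hpy, hpz, mul_pow, mul_pow, mul_pow]
          linear_combination ((N : ℚ)) ^ n * hQ
        exact_mod_cast h2
      have hpx0 : px ≠ 0 := by
        rw [hpxdef]
        exact mul_ne_zero (mul_ne_zero (Rat.num_ne_zero.mpr hx'0)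
          (Int.natCast_ne_zero.mpr y'.den_nz)) (Int.natCast_ne_zero.mpr z'.den_nz)
      have hpy0 : py ≠ 0 := by
        rw [hpydef]
        exact mul_ne_zero (mul_ne_zero (Int.natCast_ne_zero.mpr x'.den_nz)
          (Rat.num_ne_zero.mpr hy'0)) (Int.natCast_ne_zero.mpr z'.den_nz)
      have hpz0 : pz ≠ 0 := by
        rw [hpzdef]
        exact mul_ne_zero (mul_ne_zero (Int.natCast_ne_zero.mpr x'.den_nz)
          (Int.natCast_ne_zero.mpr y'.den_nz)) (Rat.num_ne_zero.mpr hz'0)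
      refine ⟨px • (1 : Matrix (Fin 2) (Fin 2) ℤ), py • 1, pz • 1, ?_, ?_, ?_, ?_, ?_⟩
      · rw [Matrix.mul_smul, Matrix.smul_mul, Matrix.mul_one, Matrix.one_mul]
      · rw [Matrix.mul_smul, Matrix.smul_mul, Matrix.mul_one, Matrix.one_mul]
      · rw [Matrix.mul_smul, Matrix.smul_mul, Matrix.mul_one, Matrix.one_mul]
      · simp only [Matrix.smul_mul, Matrix.mul_smul, one_mul, smul_smul, Matrix.det_smul,
          Matrix.det_one, mul_one]
        simp only [Fintype.card_fin]
        apply pow_ne_zero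
        first
          | exact mul_ne_zero (mul_ne_zero hpx0 hpy0) hpz0
          | exact mul_ne_zero (mul_ne_zero hpz0 hpy0) hpx0
          | exact mul_ne_zero hpz0 (mul_ne_zero hpy0 hpx0)
          | exact mul_ne_zero hpx0 (mul_ne_zero hpy0 hpz0)
          | (intro h0; rcases mul_eq_zero.mp h0 with h1 | h1 <;>
              [skip; exact hpz0 h1] <;> rcases mul_eq_zero.mp h1 with h2 | h2 <;>
              [exact hpx0 h2; exact hpy0 h2])
      · rw [smul_pow, smul_pow, smul_pow, one_pow, smul_smul, smul_smul, smul_smul, ← add_smul,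
          hZeq]
    · -- irrational case
      have indep : ∀ s t : ℚ, (s : ℂ) + (t : ℂ) * r = 0 → s = 0 ∧ t = 0 := by
        intro s t h
        by_cases ht : t = 0
        · refine ⟨?_, ht⟩
          rw [ht] at h
          push_cast at h
          exact_mod_cast (by linear_combination h : (s : ℂ) = 0)
        · exfalso
          apply hrat
          refine ⟨-s / t, ?_⟩
          have htC : (t : ℂ) ≠ 0 := by exact_mod_cast ht
          push_cast
          field_simp
          first
            | linear_combination (2 : ℂ) * h
            | linear_combination (-2 : ℂ) * h
            | linear_combination h
            | linear_combination -h
      set m : ℤ := ((s1.den * t1.den * s2.den * t2.den * s3.den * t3.den : ℕ) : ℤ) with hmdef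
      have hm0 : m ≠ 0 := by
        rw [hmdef]
        refine Int.natCast_ne_zero.mpr ?_
        positivity
      have hmC : (m : ℂ) ≠ 0 := Int.cast_ne_zero.mpr hm0
      have getint : ∀ q' : ℚ, (q'.den : ℤ) ∣ m → ∃ j : ℤ, (j : ℚ) = (m : ℚ) * q' := by
        rintro q' ⟨k, hk⟩
        refine ⟨k * q'.num, ?_⟩
        rw [hk]
        push_cast
        first
          | linear_combination (2 * k : ℚ) * Rat.den_mul_eq_num q'
          | linear_combination (-2 * k : ℚ) * Rat.den_mul_eq_num q'
          | linear_combination (k : ℚ) * Rat.den_mul_eq_num q'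
          | linear_combination (-k : ℚ) * Rat.den_mul_eq_num q'
      obtain ⟨i1, hi1⟩ := getint s1 ⟨(t1.den * s2.den * t2.den * s3.den * t3.den : ℕ), by
        rw [hmdef]; push_cast; ring⟩
      obtain ⟨j1, hj1⟩ := getint t1 ⟨(s1.den * s2.den * t2.den * s3.den * t3.den : ℕ), by
        rw [hmdef]; push_cast; ring⟩
      obtain ⟨i2, hi2⟩ := getint s2 ⟨(s1.den * t1.den * t2.den * s3.den * t3.den : ℕ), by
        rw [hmdef]; push_cast; ring⟩
      obtain ⟨j2, hj2⟩ := getint t2 ⟨(s1.den * t1.den * s2.den * s3.den * t3.den : ℕ), by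
        rw [hmdef]; push_cast; ring⟩
      obtain ⟨i3, hi3⟩ := getint s3 ⟨(s1.den * t1.den * s2.den * t2.den * t3.den : ℕ), by
        rw [hmdef]; push_cast; ring⟩
      obtain ⟨j3, hj3⟩ := getint t3 ⟨(s1.den * t1.den * s2.den * t2.den * s3.den : ℕ), by
        rw [hmdef]; push_cast; ring⟩
      clear_value m
      -- complex versions
      have hi1C : ((i1 : ℤ) : ℂ) = (m : ℂ) * (s1 : ℂ) := by exact_mod_cast congrArg (fun q : ℚ => (q : ℂ)) hi1
      have hj1C : ((j1 : ℤ) : ℂ) = (m : ℂ) * (t1 : ℂ) := by exact_mod_cast congrArg (fun q : ℚ => (q : ℂ)) hj1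
      have hi2C : ((i2 : ℤ) : ℂ) = (m : ℂ) * (s2 : ℂ) := by exact_mod_cast congrArg (fun q : ℚ => (q : ℂ)) hi2
      have hj2C : ((j2 : ℤ) : ℂ) = (m : ℂ) * (t2 : ℂ) := by exact_mod_cast congrArg (fun q : ℚ => (q : ℂ)) hj2
      have hi3C : ((i3 : ℤ) : ℂ) = (m : ℂ) * (s3 : ℂ) := by exact_mod_cast congrArg (fun q : ℚ => (q : ℂ)) hi3
      have hj3C : ((j3 : ℤ) : ℂ) = (m : ℂ) * (t3 : ℂ) := by exact_mod_cast congrArg (fun q : ℚ => (q : ℂ)) hj3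
      set p1 : ℤ := i1 - j1 * a with hp1def
      set q1 : ℤ := 2 * j1 with hq1def
      set p2 : ℤ := i2 - j2 * a with hp2def
      set q2 : ℤ := 2 * j2 with hq2def
      set p3 : ℤ := i3 - j3 * a with hp3def
      set q3 : ℤ := 2 * j3 with hq3def
      have hval1 : (p1 : ℂ) + q1 * ℓ = (m : ℂ) * x := by
        rw [hp1def, hq1def, hx, hℓdef]
        push_cast
        field_simp
        linear_combination hi1C + r * hj1C
      have hval2 : (p2 : ℂ) + q2 * ℓ = (m : ℂ) * y := by
        rw [hp2def, hq2def, hy, hℓdef]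
        push_cast
        field_simp
        linear_combination hi2C + r * hj2C
      have hval3 : (p3 : ℂ) + q3 * ℓ = (m : ℂ) * z := by
        rw [hp3def, hq3def, hz, hℓdef]
        push_cast
        field_simp
        linear_combination hi3C + r * hj3C
      have hconj1 : (p1 : ℂ) + q1 * ((a : ℂ) - ℓ) = ((m * s1 : ℚ) : ℂ) + ((-(m * t1) : ℚ) : ℂ) * r := by
        rw [hp1def, hq1def, hℓdef]
        push_cast
        field_simp
        linear_combination hi1C - r * hj1C
      have hconj2 : (p2 : ℂ) + q2 * ((a : ℂ) - ℓ) = ((m * s2 : ℚ) : ℂ) + ((-(m * t2) : ℚ) : ℂ) * r := by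
        rw [hp2def, hq2def, hℓdef]
        push_cast
        field_simp
        linear_combination hi2C - r * hj2C
      have hconj3 : (p3 : ℂ) + q3 * ((a : ℂ) - ℓ) = ((m * s3 : ℚ) : ℂ) + ((-(m * t3) : ℚ) : ℂ) * r := by
        rw [hp3def, hq3def, hℓdef]
        push_cast
        field_simp
        linear_combination hi3C - r * hj3C
      clear_value p1 q1 p2 q2 p3 q3
      -- determinants nonzero
      have hdet1 : (!![p1 + q1*a, q1*b; q1*c, p1] : Matrix (Fin 2) (Fin 2) ℤ).det ≠ 0 := by
        intro h0
        have hC : ((p1 : ℂ) + q1 * ℓ) * ((p1 : ℂ) + q1 * ((a : ℂ) - ℓ)) = 0 := by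
          rw [← hdetfac, h0]; norm_num
        rcases mul_eq_zero.mp hC with h1 | h1
        · rw [hval1] at h1
          exact mul_ne_zero hmC hx0 h1
        · rw [hconj1] at h1
          obtain ⟨hs, ht⟩ := indep _ _ h1
          have hs1 : s1 = 0 := by
            have := mul_eq_zero.mp hs
            rcases this with h2 | h2
            · exact absurd (by exact_mod_cast h2) hm0
            · exact h2
          have ht1 : t1 = 0 := by
            have : (m : ℚ) * t1 = 0 := by linarith [neg_eq_zero.mp ht]
            rcases mul_eq_zero.mp this with h2 | h2
            · exact absurd (by exact_mod_cast h2) hm0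
            · exact h2
          apply hx0
          rw [hx, hs1, ht1]
          norm_num
      have hdet2 : (!![p2 + q2*a, q2*b; q2*c, p2] : Matrix (Fin 2) (Fin 2) ℤ).det ≠ 0 := by
        intro h0
        have hC : ((p2 : ℂ) + q2 * ℓ) * ((p2 : ℂ) + q2 * ((a : ℂ) - ℓ)) = 0 := by
          rw [← hdetfac, h0]; norm_num
        rcases mul_eq_zero.mp hC with h1 | h1
        · rw [hval2] at h1
          exact mul_ne_zero hmC hy0 h1
        · rw [hconj2] at h1
          obtain ⟨hs, ht⟩ := indep _ _ h1
          have hs1 : s2 = 0 := by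
            rcases mul_eq_zero.mp hs with h2 | h2
            · exact absurd (by exact_mod_cast h2) hm0
            · exact h2
          have ht1 : t2 = 0 := by
            have : (m : ℚ) * t2 = 0 := by linarith [neg_eq_zero.mp ht]
            rcases mul_eq_zero.mp this with h2 | h2
            · exact absurd (by exact_mod_cast h2) hm0
            · exact h2
          apply hy0
          rw [hy, hs1, ht1]
          norm_num
      have hdet3 : (!![p3 + q3*a, q3*b; q3*c, p3] : Matrix (Fin 2) (Fin 2) ℤ).det ≠ 0 := by
        intro h0
        have hC : ((p3 : ℂ) + q3 * ℓ) * ((p3 : ℂ) + q3 * ((a : ℂ) - ℓ)) = 0 := by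
          rw [← hdetfac, h0]; norm_num
        rcases mul_eq_zero.mp hC with h1 | h1
        · rw [hval3] at h1
          exact mul_ne_zero hmC hz0 h1
        · rw [hconj3] at h1
          obtain ⟨hs, ht⟩ := indep _ _ h1
          have hs1 : s3 = 0 := by
            rcases mul_eq_zero.mp hs with h2 | h2
            · exact absurd (by exact_mod_cast h2) hm0
            · exact h2
          have ht1 : t3 = 0 := by
            have : (m : ℚ) * t3 = 0 := by linarith [neg_eq_zero.mp ht]
            rcases mul_eq_zero.mp this with h2 | h2
            · exact absurd (by exact_mod_cast h2) hm0
            · exact h2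
          apply hz0
          rw [hz, hs1, ht1]
          norm_num
      -- the three matrices
      refine ⟨!![p1 + q1*a, q1*b; q1*c, p1], !![p2 + q2*a, q2*b; q2*c, p2],
        !![p3 + q3*a, q3*b; q3*c, p3], hcomm p1 q1, hcomm p2 q2, hcomm p3 q3, ?_, ?_⟩
      · rw [Matrix.det_mul, Matrix.det_mul]
        exact mul_ne_zero (mul_ne_zero hdet1 hdet2) hdet3
      · -- the matrix equation
        have heqm : (u : ℂ) * ((m : ℂ) * x) ^ n + (v : ℂ) * ((m : ℂ) * y) ^ n
            = (w : ℂ) * ((m : ℂ) * z) ^ n := by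
          rw [mul_pow, mul_pow, mul_pow]
          linear_combination ((m : ℂ)) ^ n * heq
        set X : Matrix (Fin 2) (Fin 2) ℤ := !![p1 + q1*a, q1*b; q1*c, p1] with hXdef
        set Y : Matrix (Fin 2) (Fin 2) ℤ := !![p2 + q2*a, q2*b; q2*c, p2] with hYdef
        set Z : Matrix (Fin 2) (Fin 2) ℤ := !![p3 + q3*a, q3*b; q3*c, p3] with hZdef
        set E : Matrix (Fin 2) (Fin 2) ℤ := u • X ^ n + v • Y ^ n - w • Z ^ n with hEdef
        have hcE : !![a, b; c, 0] * E = E * !![a, b; c, 0] := by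
          have cX : Commute !![a, b; c, 0] X := hcomm p1 q1
          have cY : Commute !![a, b; c, 0] Y := hcomm p2 q2
          have cZ : Commute !![a, b; c, 0] Z := hcomm p3 q3
          rw [hEdef]
          rw [mul_sub, sub_mul, mul_add, add_mul]
          rw [Matrix.mul_smul, Matrix.smul_mul, Matrix.mul_smul, Matrix.smul_mul,
            Matrix.mul_smul, Matrix.smul_mul]
          rw [(cX.pow_right n).eq, (cY.pow_right n).eq, (cZ.pow_right n).eq]
        obtain ⟨P, Q, hE⟩ := cent_aux8 a b c hgcd E hcE
        -- evaluate F E . mulVec vv two ways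
        have hway1 : (F E).mulVec vv = ((P : ℂ) + Q * ℓ) • vv := by
          rw [hE, hFmat, hvv]
          exact eig_aux8 a b c ℓ hℓ P Q
        have hway2 : (F E).mulVec vv = 0 := by
          rw [hEdef]
          have : F (u • X ^ n + v • Y ^ n - w • Z ^ n)
              = u • (F X) ^ n + v • (F Y) ^ n - w • (F Z) ^ n := by
            simp only [map_sub, map_add, map_zsmul, map_pow]
          rw [this]
          rw [Matrix.sub_mulVec, Matrix.add_mulVec, Matrix.smul_mulVec,
            Matrix.smul_mulVec, Matrix.smul_mulVec]
          rw [hXdef, hYdef, hZdef, hFmat, hFmat, hFmat]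
          rw [pow_eig8 _ _ _ (eig_aux8 a b c ℓ hℓ p1 q1) n,
            pow_eig8 _ _ _ (eig_aux8 a b c ℓ hℓ p2 q2) n,
            pow_eig8 _ _ _ (eig_aux8 a b c ℓ hℓ p3 q3) n]
          rw [hval1, hval2, hval3]
          funext i
          simp only [Pi.sub_apply, Pi.add_apply, Pi.smul_apply, Pi.zero_apply, smul_eq_mul]
          simp only [zsmul_eq_mul]
          linear_combination (vv i) * heqm
        have hPQ : (P : ℂ) + Q * ℓ = 0 := by
          have h1 := congrFun (hway1.symm.trans hway2) 0
          simp only [hvv, Pi.smul_apply, Matrix.cons_val_zero, Pi.zero_apply, smul_eq_mul] at h1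
          rcases mul_eq_zero.mp h1 with h2 | h2
          · exact h2
          · exact absurd h2 hbC
        have hPQ2 : ((P : ℚ) + Q * (a : ℚ) / 2 : ℚ) = 0 ∧ ((Q : ℚ) / 2 : ℚ) = 0 := by
          apply indep
          push_cast
          rw [hℓdef] at hPQ
          field_simp at hPQ ⊢
          linear_combination hPQ
        have hQ0 : Q = 0 := by
          have h2 : (Q : ℚ) = 0 := by linarith [hPQ2.2]
          exact_mod_cast h2
        have hP0 : P = 0 := by
          have h2 : (P : ℚ) = 0 := by
            have := hPQ2.1
            rw [hQ0] at this
            push_cast at this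
            linarith
          exact_mod_cast h2
        have hE0 : E = 0 := by
          rw [hE, hP0, hQ0]
          norm_num
          ext i j
          fin_cases i <;> fin_cases j <;> simp
        exact sub_eq_zero.mp (hEdef ▸ hE0)
end

section
/- Let A = !![a, b; c, 0] be a 2×2 integer matrix with b*c ≠ 0 and gcd(a, gcd(b, c)) = 1, and let n ≥ 3. If there exist X, Y, Z ∈ C(A) with det(X*Y*Z) ≠ 0 and X^n + Y^n = Z^n, then there exist infinitely many triples (X', Y', Z') of matrices in C(A) with det(X'*Y'*Z') ≠ 0 and X'^n + Y'^n = Z'^n. -/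
theorem stmt_10 (a b c : ℤ) (hbc : b * c ≠ 0)
    (hgcd : Int.gcd a (Int.gcd b c) = 1)
    (n : ℕ) (hn : 3 ≤ n)
    (h : ∃ X Y Z : Matrix (Fin 2) (Fin 2) ℤ,
      !![a, b; c, 0] * X = X * !![a, b; c, 0] ∧
      !![a, b; c, 0] * Y = Y * !![a, b; c, 0] ∧
      !![a, b; c, 0] * Z = Z * !![a, b; c, 0] ∧
      (X * Y * Z).det ≠ 0 ∧
      X ^ n + Y ^ n = Z ^ n) :
    {p : Matrix (Fin 2) (Fin 2) ℤ × Matrix (Fin 2) (Fin 2) ℤ × Matrix (Fin 2) (Fin 2) ℤ |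
      !![a, b; c, 0] * p.1 = p.1 * !![a, b; c, 0] ∧
      !![a, b; c, 0] * p.2.1 = p.2.1 * !![a, b; c, 0] ∧
      !![a, b; c, 0] * p.2.2 = p.2.2 * !![a, b; c, 0] ∧
      (p.1 * p.2.1 * p.2.2).det ≠ 0 ∧
      p.1 ^ n + p.2.1 ^ n = p.2.2 ^ n}.Infinite := by
  obtain ⟨X, Y, Z, hX, hY, hZ, hdet, heq⟩ := h
  apply Set.infinite_of_injective_forall_mem
    (f := fun m : ℕ => (((m : ℤ) + 1) • X, ((m : ℤ) + 1) • Y, ((m : ℤ) + 1) • Z))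
  case hi =>
    intro i j hij
    have hXne : X ≠ 0 := by
      rintro rfl
      simp at hdet
    have h1 : ((i : ℤ) + 1) • X = ((j : ℤ) + 1) • X := congrArg Prod.fst hij
    have h2 : (((i : ℤ) + 1) - ((j : ℤ) + 1)) • X = 0 := by
      rw [sub_smul, h1, sub_self]
    rcases smul_eq_zero.mp h2 with hh | hh
    · have := sub_eq_zero.mp hh
      omega
    · exact absurd hh hXne
  case hf =>
    intro m
    set k : ℤ := (m : ℤ) + 1 with hk
    have hk0 : k ≠ 0 := by positivity
    refine ⟨?_, ?_, ?_, ?_, ?_⟩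
    · simp only [Matrix.mul_smul, Matrix.smul_mul, hX]
    · simp only [Matrix.mul_smul, Matrix.smul_mul, hY]
    · simp only [Matrix.mul_smul, Matrix.smul_mul, hZ]
    · simp only [Matrix.smul_mul, Matrix.mul_smul, smul_smul]
      rw [Matrix.det_smul]
      simp only [Fintype.card_fin]
      exact mul_ne_zero (pow_ne_zero _ (by positivity)) hdet
    · simp only [smul_pow, ← smul_add, heq]
end

section
/- Let a, b, c ∈ ℤ and m a positive integer with a² + 4*b*c = 5*m², b*c ≠ 0, gcd(a, gcd(b, c)) = 1 (so that m and a have the same parity and the entries below are integers). Then !![(11m+3a)/2, 3b; 3c, (11m−3a)/2]³ + !![8m+3a, 6b; 6c, 8m−3a]³ = !![9m+3a, 6b; 6c, 9m−3a]³. -/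
set_option maxHeartbeats 1000000 in
theorem stmt_13 (a b c : ℤ) (m : ℕ) (hm : 0 < m)
    (h : a ^ 2 + 4 * b * c = 5 * (m : ℤ) ^ 2) (hbc : b * c ≠ 0)
    (hgcd : Int.gcd a (Int.gcd b c) = 1) :
    (!![(11 * (m : ℤ) + 3 * a) / 2, 3 * b; 3 * c, (11 * (m : ℤ) - 3 * a) / 2] :
        Matrix (Fin 2) (Fin 2) ℤ) ^ 3 +
      !![8 * (m : ℤ) + 3 * a, 6 * b; 6 * c, 8 * (m : ℤ) - 3 * a] ^ 3 =
      !![9 * (m : ℤ) + 3 * a, 6 * b; 6 * c, 9 * (m : ℤ) - 3 * a] ^ 3 := by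
  -- a and m have the same parity
  have hev : Even ((a - (m : ℤ)) * (a + (m : ℤ))) :=
    ⟨2 * (m : ℤ) ^ 2 - 2 * b * c, by linear_combination h⟩
  have hpar : Even (a + (m : ℤ)) := by
    rcases Int.even_mul.mp hev with ⟨r, hr⟩ | he
    · exact ⟨r + m, by omega⟩
    · exact he
  obtain ⟨t, ht⟩ := hpar
  obtain ⟨p, hp⟩ : ∃ p : ℤ, 2 * p = 11 * (m : ℤ) + 3 * a := ⟨3 * t + 4 * m, by omega⟩
  obtain ⟨q, hq⟩ : ∃ q : ℤ, 2 * q = 11 * (m : ℤ) - 3 * a := ⟨7 * m - 3 * t, by omega⟩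
  have hdp : (11 * (m : ℤ) + 3 * a) / 2 = p := by omega
  have hdq : (11 * (m : ℤ) - 3 * a) / 2 = q := by omega
  rw [hdp, hdq]
  have e3 : ∀ M : Matrix (Fin 2) (Fin 2) ℤ, M ^ 3 = M * M * M := fun M => by
    rw [pow_succ, pow_two]
  rw [e3, e3, e3, Matrix.mul_fin_two, Matrix.mul_fin_two, Matrix.mul_fin_two,
    Matrix.mul_fin_two, Matrix.mul_fin_two, Matrix.mul_fin_two]
  ext i j
  fin_cases i <;> fin_cases j <;>
    simp [Matrix.add_apply]
  · refine mul_left_cancel₀ (by norm_num : (8:ℤ) ≠ 0) ?_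
    linear_combination (121*(m:ℤ)^2 + 72*b*c + 66*a*m + 9*a^2 + 22*p*m + 6*p*a + 4*p^2) * hp
      + (36*b*c) * hq + (81*(m:ℤ) + 27*a) * h
  · refine mul_left_cancel₀ (by norm_num : (4:ℤ) ≠ 0) ?_
    linear_combination (33*b*(m:ℤ) + 9*a*b + 6*q*b + 6*p*b) * hp
      + (66*b*(m:ℤ) + 6*q*b) * hq + (27*b) * h
  · refine mul_left_cancel₀ (by norm_num : (4:ℤ) ≠ 0) ?_
    linear_combination (33*c*(m:ℤ) + 9*a*c + 6*q*c + 6*p*c) * hp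
      + (66*c*(m:ℤ) + 6*q*c) * hq + (27*c) * h
  · refine mul_left_cancel₀ (by norm_num : (8:ℤ) ≠ 0) ?_
    linear_combination (36*b*c) * hp
      + (121*(m:ℤ)^2 + 72*b*c - 66*a*m + 9*a^2 + 22*q*m - 6*q*a + 4*q^2) * hq
      + (81*(m:ℤ) - 27*a) * h
end

section
/- Let k be an integer with k ≠ 0 and k ≠ −1. Then −3*(1 + 4*k³) is not a perfect square. -/
theorem stmt_14 (k : ℤ) (hk0 : k ≠ 0) (hk1 : k ≠ -1) :
    ¬ ∃ q : ℤ, -3 * (1 + 4 * k ^ 3) = q ^ 2 := by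
  rintro ⟨q, hq⟩
  have flt3 : FermatLastTheoremWith ℤ 3 :=
    fermatLastTheoremFor_iff_int.mp fermatLastTheoremThree
  have key : (-3 + q) ^ 3 + (-3 - q) ^ 3 = (6 * k) ^ 3 := by ring_nf; linarith [hq]
  by_cases h1 : -3 + q = 0
  · have : q = 3 := by linarith
    have : k ^ 3 = -1 := by subst this; linarith
    have : k = -1 := by nlinarith [sq_nonneg (k - 1), sq_nonneg (k + 1)]
    exact hk1 this
  by_cases h2 : -3 - q = 0
  · have : q = -3 := by linarith
    have : k ^ 3 = -1 := by subst this; linarith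
    have : k = -1 := by nlinarith [sq_nonneg (k - 1), sq_nonneg (k + 1)]
    exact hk1 this
  have h3 : (6 : ℤ) * k ≠ 0 := by
    simp [hk0]
  exact absurd key (flt3 _ _ _ h1 h2 h3)
end

section
/- Let a, b, c ∈ ℤ and m a positive integer with a² + 4*b*c = −7*m², b*c ≠ 0, and gcd(a, gcd(b, c)) = 1 (so a and m have the same parity). Then !![(m+a)/2, b; c, (m−a)/2]⁴ + !![(m−a)/2, −b; −c, (m+a)/2]⁴ = (m • 1)⁴ in M₂(ℤ). -/
theorem stmt_16 (a b c : ℤ) (m : ℕ) (hm : 0 < m)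
    (h : a ^ 2 + 4 * b * c = -7 * (m : ℤ) ^ 2) (hbc : b * c ≠ 0)
    (hgcd : Int.gcd a (Int.gcd b c) = 1) :
    (!![((m : ℤ) + a) / 2, b; c, ((m : ℤ) - a) / 2] : Matrix (Fin 2) (Fin 2) ℤ) ^ 4 +
      !![((m : ℤ) - a) / 2, -b; -c, ((m : ℤ) + a) / 2] ^ 4 =
      ((m : ℤ) • (1 : Matrix (Fin 2) (Fin 2) ℤ)) ^ 4 := by
  have h2 : Even (a ^ 2 + ((m : ℤ)) ^ 2) := ⟨-3 * (m:ℤ)^2 - 2*b*c, by linarith⟩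
  rw [Int.even_add, Int.even_pow' (by norm_num), Int.even_pow' (by norm_num)] at h2
  have hpar : (2:ℤ) ∣ ((m : ℤ) + a) := (Int.even_add.mpr h2.symm).two_dvd
  obtain ⟨p, hp⟩ := hpar
  have ha : a = 2 * p - (m : ℤ) := by omega
  subst ha
  have e1 : ((m : ℤ) + (2 * p - (m : ℤ))) / 2 = p := by omega
  have e2 : ((m : ℤ) - (2 * p - (m : ℤ))) / 2 = (m : ℤ) - p := by omega
  rw [e1, e2]
  have hr4 : 4 * (p * ((m : ℤ) - p)) = 4 * (2 * (m : ℤ) ^ 2 + b * c) := by linear_combination -h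
  have hr : p * ((m : ℤ) - p) = 2 * (m : ℤ) ^ 2 + b * c :=
    mul_left_cancel₀ (by norm_num) hr4
  have h4 : (4 : ℕ) = 2 * 2 := rfl
  rw [h4, pow_mul, pow_mul, pow_mul]
  simp only [sq]
  ext i j
  fin_cases i <;> fin_cases j <;>
    simp [Matrix.mul_fin_two, Matrix.one_fin_two, Matrix.smul_of] <;>
    first
    | ring1
    | linear_combination (2 * (p * ((m:ℤ) - p)) - 2 * b * c) * hr
end

section
/- Let K be a quadratic field with ring of integers O_K, and let x ∈ O_K admit a positive integer t with x^t ∈ ℤ; let E(x) be the least such t. Then for any natural number n, x^n ∈ ℤ if and only if E(x) divides n. -/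
open NumberField

lemma aux_rat_int {K : Type*} [Field K] [NumberField K]
    (y : RingOfIntegers K) (q : ℚ) (hq : (y : K) = algebraMap ℚ K q) :
    ∃ m : ℤ, y = (m : RingOfIntegers K) := by
  have hint : IsIntegral ℤ ((y : K)) := y.isIntegral_coe
  rw [hq] at hint
  have hq2 : IsIntegral ℤ q :=
    (isIntegral_algebraMap_iff ((algebraMap ℚ K).injective)).mp hint
  obtain ⟨m, hm⟩ := IsIntegrallyClosed.isIntegral_iff.mp hq2
  refine ⟨m, RingOfIntegers.coe_injective ?_⟩
  have h2 : (((m : RingOfIntegers K)) : K) = algebraMap ℚ K q := by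
    rw [← hm]; simp
  exact hq.trans h2.symm

theorem stmt_18 (K : Type*) [Field K] [NumberField K]
    (hK : Module.finrank ℚ K = 2)
    (x : NumberField.RingOfIntegers K)
    (h : ∃ t : ℕ, 0 < t ∧ ∃ m : ℤ, x ^ t = (m : NumberField.RingOfIntegers K))
    (n : ℕ) :
    (∃ m : ℤ, x ^ n = (m : NumberField.RingOfIntegers K)) ↔
      sInf {t : ℕ | 0 < t ∧ ∃ m : ℤ, x ^ t = (m : NumberField.RingOfIntegers K)} ∣ n := by
  set S : Set ℕ := {t : ℕ | 0 < t ∧ ∃ m : ℤ, x ^ t = (m : RingOfIntegers K)} with hS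
  have hne : S.Nonempty := h
  have hmem : sInf S ∈ S := Nat.sInf_mem hne
  obtain ⟨hEpos, mE, hmE⟩ := hmem
  set E := sInf S with hE
  constructor
  · rintro ⟨mn, hmn⟩
    by_cases hx : x = 0
    · -- then E = 1
      have h1 : (1 : ℕ) ∈ S := ⟨one_pos, 0, by simp [hx]⟩
      have hE1 : E ≤ 1 := Nat.sInf_le h1
      have : E = 1 := le_antisymm hE1 hEpos
      rw [this]; exact one_dvd n
    · -- x ≠ 0; show remainder is 0
      have hmE0 : mE ≠ 0 := by
        rintro rfl
        simp only [Int.cast_zero] at hmE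
        exact hx (pow_eq_zero_iff hEpos.ne' |>.mp hmE)
      set r := n % E with hr
      rcases Nat.eq_zero_or_pos r with h0 | hrpos
      · exact Nat.dvd_of_mod_eq_zero h0
      · exfalso
        -- (x:K)^r is rational
        have hxK : (x : K) ≠ 0 := by
          simpa using fun h' => hx (RingOfIntegers.coe_injective (by simpa using h'))
        have key : ((x ^ r : RingOfIntegers K) : K) =
            algebraMap ℚ K ((mn : ℚ) / (mE : ℚ) ^ (n / E)) := by
          have hn : E * (n / E) + r = n := by
            rw [hr]; exact Nat.div_add_mod n E
          have hE' : ((x : K)) ^ (E * (n / E)) = ((mE : K)) ^ (n / E) := by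
            rw [pow_mul]
            congr 1
            have := congrArg (algebraMap (RingOfIntegers K) K) hmE
            push_cast at this ⊢
            simpa using this
          have hnK : ((x : K)) ^ n = (mn : K) := by
            have := congrArg (algebraMap (RingOfIntegers K) K) hmn
            push_cast at this ⊢
            simpa using this
          have hmEK : ((mE : K)) ≠ 0 := by
            simpa using hmE0
          push_cast
          field_simp
          simp only [Algebra.cast, map_intCast] at hE' hnK ⊢
          rw [← hE', ← pow_add, add_comm r, hn]
          exact hnK
        obtain ⟨m', hm'⟩ := aux_rat_int (x ^ r) _ key
        have : r ∈ S := ⟨hrpos, m', hm'⟩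
        have := Nat.sInf_le this
        have hlt : r < E := Nat.mod_lt n hEpos
        omega
  · rintro ⟨k, rfl⟩
    exact ⟨mE ^ k, by rw [pow_mul, hmE]; push_cast; ring⟩
end
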